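/- arXiv:0707.1381 — 7 statements merged into one kernel-verified Lean document; each statement's English description precedes it below -/
import Mathlib

section
/- Let S be an m×n integer matrix with no zero column and let ρ₀ = lcm{e(J) : ∅ ≠ J ⊆ [n]} be its lcm period. Then for every positive integer q with gcd(q, ρ₀) = 1, the number of points z ∈ (ℤ/qℤ)^m such that every entry of zS is nonzero equals Σ_{J⊆[n]} (−1)^{|J|} q^{m−ℓ(J)} (the value at q of the ordinary characteristic polynomial of the real hyperplane arrangement defined by the columns of S). -/
open Matrix Finset

set_option linter.unusedSectionVars false
set_option linter.unusedVariables false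
set_option maxHeartbeats 1000000



/-- The number of points of the complement of the mod-`q` reduction of the
integral arrangement defined by the columns of `S`. -/
noncomputable def chiCount (m n q : ℕ) (S : Matrix (Fin m) (Fin n) ℤ) : ℕ :=
  Nat.card {z : Fin m → ZMod q //
    ∀ j, Matrix.vecMul z (S.map (fun a => (a : ZMod q))) j ≠ 0}

/-- The `k`-th determinantal divisor of the submatrix `S_J`; one has
`detDivisor S J k = e_{J,1} ⋯ e_{J,k}` for `k ≤ rank S_J`, where the `e_{J,j}`
are the elementary divisors of `S_J`. -/
def detDivisor {m n : ℕ} (S : Matrix (Fin m) (Fin n) ℤ) (J : Finset (Fin n)) (k : ℕ) : ℕ :=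
  Finset.gcd Finset.univ
    (fun p : (Fin k → Fin m) × (Fin k → {j : Fin n // j ∈ J}) =>
      (Matrix.det (Matrix.of fun a b => S (p.1 a) (p.2 b).1)).natAbs)

variable {m r : ℕ} {ν : Type*} [Fintype ν] [DecidableEq ν]

lemma key_identity {q : ℕ} (T : Matrix (Fin m) ν ℤ)
    (hminor : ∀ (f : Fin (r+1) → Fin m) (g : Fin (r+1) → ν), (T.submatrix f g).det = 0)
    (f : Fin r → Fin m) (g : Fin r → ν)
    (hu : IsUnit ((T.map (fun a => (a : ZMod q))).submatrix f g).det) :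
    ∀ i j, (T.map (fun a => (a : ZMod q))) i j =
      ∑ b, (∑ a, (T.map (fun a => (a : ZMod q))) i (g a) *
        ((T.map (fun a => (a : ZMod q))).submatrix f g)⁻¹ a b) *
          (T.map (fun a => (a : ZMod q))) (f b) j := by
  intro i j
  set R := ZMod q
  set T' : Matrix (Fin m) ν R := T.map (fun a => (a : ZMod q)) with hT'
  set A : Matrix (Fin r) (Fin r) R := T'.submatrix f g with hA
  haveI : Invertible A := A.invertibleOfIsUnitDet hu
  set B : Matrix (Fin r) (Fin 1) R := Matrix.of (fun a _ => T' (f a) j) with hB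
  set C : Matrix (Fin 1) (Fin r) R := Matrix.of (fun _ b => T' i (g b)) with hC
  set D : Matrix (Fin 1) (Fin 1) R := Matrix.of (fun _ _ => T' i j) with hD
  set F : Fin r ⊕ Fin 1 → Fin m := Sum.elim f (fun _ => i) with hF
  set G : Fin r ⊕ Fin 1 → ν := Sum.elim g (fun _ => j) with hG
  have hM : Matrix.fromBlocks A B C D = T'.submatrix F G := by
    ext x y
    cases x <;> cases y <;> rfl
  have hdet0 : (Matrix.fromBlocks A B C D).det = 0 := by
    rw [hM, ← Matrix.det_submatrix_equiv_self (finSumFinEquiv (m := r) (n := 1)).symm]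
    have h5 : (T'.submatrix F G).submatrix
        (finSumFinEquiv (m := r) (n := 1)).symm (finSumFinEquiv (m := r) (n := 1)).symm =
        (T.submatrix (F ∘ (finSumFinEquiv (m := r) (n := 1)).symm)
          (G ∘ (finSumFinEquiv (m := r) (n := 1)).symm)).map (fun a => (a : ZMod q)) := by
      ext x y; rfl
    rw [h5]
    have h6 := RingHom.map_det (Int.castRingHom R)
      (T.submatrix (F ∘ (finSumFinEquiv (m := r) (n := 1)).symm)
        (G ∘ (finSumFinEquiv (m := r) (n := 1)).symm))
    rw [hminor] at h6
    simpa using h6.symm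
  rw [Matrix.det_fromBlocks₁₁] at hdet0
  have h2 : (D - C * ⅟A * B).det = 0 := (hu.mul_right_eq_zero).mp hdet0
  rw [Matrix.det_fin_one] at h2
  have h3 : D 0 0 = (C * ⅟A * B) 0 0 := by
    have h2' : D 0 0 - (C * ⅟A * B) 0 0 = 0 := by
      simpa [Matrix.sub_apply] using h2
    exact sub_eq_zero.mp h2'
  rw [Matrix.invOf_eq_nonsing_inv] at h3
  have h4 : (C * A⁻¹ * B) 0 0 = ∑ b, (∑ a, T' i (g a) * A⁻¹ a b) * T' (f b) j := by
    simp [Matrix.mul_apply, hB, hC]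
  rw [h4] at h3
  exact h3

lemma count_ker_of_unit_minor {q : ℕ} [NeZero q] (T : Matrix (Fin m) ν ℤ) (hrm : r ≤ m)
    (hminor : ∀ (f : Fin (r+1) → Fin m) (g : Fin (r+1) → ν), (T.submatrix f g).det = 0)
    (f : Fin r → Fin m) (g : Fin r → ν)
    (hu : IsUnit ((T.map (fun a => (a : ZMod q))).submatrix f g).det) :
    Nat.card {z : Fin m → ZMod q // ∀ j, Matrix.vecMul z (T.map (fun a => (a : ZMod q))) j = 0}
      = q ^ (m - r) := by
  classical
  have hk := key_identity T hminor f g hu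
  set T' : Matrix (Fin m) ν (ZMod q) := T.map (fun a => (a : ZMod q)) with hT'
  set A : Matrix (Fin r) (Fin r) (ZMod q) := T'.submatrix f g with hA
  set P : Matrix (Fin m) (Fin r) (ZMod q) := T'.submatrix id g with hP
  set Q : Matrix (Fin r) ν (ZMod q) := T'.submatrix f id with hQ
  have hfact : T' = P * A⁻¹ * Q := by
    ext i j
    rw [hk i j]
    simp [Matrix.mul_apply, hP, hQ, hA]
  have hker : ∀ z : Fin m → ZMod q,
      (∀ j, Matrix.vecMul z T' j = 0) ↔ Matrix.vecMul z P = 0 := by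
    intro z
    constructor
    · intro h
      funext a
      have h1 : Matrix.vecMul z P a = Matrix.vecMul z T' (g a) := by
        simp [Matrix.vecMul, dotProduct, hP]
      rw [h1, h]
      rfl
    · intro h j
      have h1 : Matrix.vecMul z T' = Matrix.vecMul (Matrix.vecMul z P) (A⁻¹ * Q) := by
        rw [Matrix.vecMul_vecMul, ← Matrix.mul_assoc, ← hfact]
      rw [h1, h, Matrix.zero_vecMul]
      simp
  have hsurj : Function.Surjective P.vecMulLinear := by
    intro w
    set E : Matrix (Fin r) (Fin m) (ZMod q) := Matrix.of (fun a i => if f a = i then 1 else 0)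
      with hE
    have hEP : E * P = A := by
      ext a b
      simp [Matrix.mul_apply, hE, hP, hA, ite_mul]
    refine ⟨Matrix.vecMul (Matrix.vecMul w A⁻¹) E, ?_⟩
    simp only [Matrix.vecMulLinear_apply]
    rw [Matrix.vecMul_vecMul, Matrix.vecMul_vecMul, hEP,
      Matrix.nonsing_inv_mul _ hu, Matrix.vecMul_one]
  have e1 : Nat.card {z : Fin m → ZMod q // ∀ j, Matrix.vecMul z T' j = 0}
      = Nat.card (LinearMap.ker P.vecMulLinear) := by
    refine Nat.card_congr (Equiv.subtypeEquivRight fun z => ?_)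
    rw [LinearMap.mem_ker, Matrix.vecMulLinear_apply]
    exact hker z
  have e2 : Nat.card ((Fin m → ZMod q) ⧸ LinearMap.ker P.vecMulLinear)
      = Nat.card (Fin r → ZMod q) :=
    Nat.card_congr (LinearMap.quotKerEquivOfSurjective _ hsurj).toEquiv
  have e3 : Nat.card (Fin m → ZMod q) =
      Nat.card (LinearMap.ker P.vecMulLinear) *
        Nat.card ((Fin m → ZMod q) ⧸ LinearMap.ker P.vecMulLinear) :=
    Submodule.card_eq_card_quotient_mul_card _
  rw [e2] at e3
  have hcm : Nat.card (Fin m → ZMod q) = q ^ m := by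
    simp [Nat.card_eq_fintype_card, ZMod.card]
  have hcr : Nat.card (Fin r → ZMod q) = q ^ r := by
    simp [Nat.card_eq_fintype_card, ZMod.card]
  rw [hcm, hcr] at e3
  rw [e1]
  have hq0 : 0 < q ^ r := pow_pos (Nat.pos_of_ne_zero (NeZero.ne q)) r
  have hmain : Nat.card (LinearMap.ker P.vecMulLinear) * q ^ r = q ^ (m - r) * q ^ r := by
    rw [pow_sub_mul_pow q hrm, ← e3]
  exact Nat.eq_of_mul_eq_mul_right hq0 hmain

lemma vecMul_map_ringHom {q : ℕ} {R' : Type*} [CommRing R'] (ψ : ZMod q →+* R')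
    (T : Matrix (Fin m) ν ℤ) (z : Fin m → ZMod q) (j : ν) :
    ψ (Matrix.vecMul z (T.map (fun a => (a : ZMod q))) j)
      = Matrix.vecMul (fun i => ψ (z i)) (T.map (fun a => (a : R'))) j := by
  simp [Matrix.vecMul, dotProduct, map_sum, _root_.map_mul, map_intCast]

lemma count_mul {a b : ℕ} (h : Nat.Coprime a b) (T : Matrix (Fin m) ν ℤ) :
    Nat.card {z : Fin m → ZMod (a*b) //
        ∀ j, Matrix.vecMul z (T.map (fun x => (x : ZMod (a*b)))) j = 0}
    = Nat.card {z : Fin m → ZMod a //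
        ∀ j, Matrix.vecMul z (T.map (fun x => (x : ZMod a))) j = 0}
    * Nat.card {z : Fin m → ZMod b //
        ∀ j, Matrix.vecMul z (T.map (fun x => (x : ZMod b))) j = 0} := by
  classical
  set φ := ZMod.chineseRemainder h with hφ
  set ψ₁ : ZMod (a*b) →+* ZMod a := (RingHom.fst _ _).comp φ.toRingHom with hψ₁
  set ψ₂ : ZMod (a*b) →+* ZMod b := (RingHom.snd _ _).comp φ.toRingHom with hψ₂
  have key : ∀ z : Fin m → ZMod (a*b),
      (∀ j, Matrix.vecMul z (T.map (fun x => (x : ZMod (a*b)))) j = 0) ↔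
      ((∀ j, Matrix.vecMul (fun i => ψ₁ (z i)) (T.map (fun x => (x : ZMod a))) j = 0) ∧
       (∀ j, Matrix.vecMul (fun i => ψ₂ (z i)) (T.map (fun x => (x : ZMod b))) j = 0)) := by
    intro z
    rw [← forall_and]
    apply forall_congr'
    intro j
    rw [← vecMul_map_ringHom ψ₁, ← vecMul_map_ringHom ψ₂]
    constructor
    · intro h0
      rw [h0]
      exact ⟨map_zero _, map_zero _⟩
    · rintro ⟨h1, h2⟩
      apply φ.injective
      rw [map_zero]
      exact Prod.ext h1 h2
  let E : (Fin m → ZMod (a*b)) ≃ (Fin m → ZMod a) × (Fin m → ZMod b) :=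
    (Equiv.piCongrRight fun _ : Fin m => φ.toEquiv).trans
      (Equiv.arrowProdEquivProdArrow _ _ _)
  have e0 : {z : Fin m → ZMod (a*b) //
        ∀ j, Matrix.vecMul z (T.map (fun x => (x : ZMod (a*b)))) j = 0}
      ≃ {w : (Fin m → ZMod a) × (Fin m → ZMod b) //
          (∀ j, Matrix.vecMul w.1 (T.map (fun x => (x : ZMod a))) j = 0) ∧
          (∀ j, Matrix.vecMul w.2 (T.map (fun x => (x : ZMod b))) j = 0)} :=
    Equiv.subtypeEquiv E (fun z => key z)
  rw [Nat.card_congr (e0.trans (Equiv.subtypeProdEquivProd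
    (p := fun z1 : Fin m → ZMod a => ∀ j, Matrix.vecMul z1 (T.map (fun x => (x : ZMod a))) j = 0)
    (q := fun z2 : Fin m → ZMod b => ∀ j, Matrix.vecMul z2 (T.map (fun x => (x : ZMod b))) j = 0))),
    Nat.card_prod]

lemma count_eq (T : Matrix (Fin m) ν ℤ) {r : ℕ} (hrm : r ≤ m)
    (hminor : ∀ (f : Fin (r+1) → Fin m) (g : Fin (r+1) → ν), (T.submatrix f g).det = 0)
    (q : ℕ) (hq : 0 < q)
    (hco : Nat.Coprime q (Finset.gcd Finset.univ
      (fun p : (Fin r → Fin m) × (Fin r → ν) => ((T.submatrix p.1 p.2).det).natAbs))) :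
    Nat.card {z : Fin m → ZMod q // ∀ j, Matrix.vecMul z (T.map (fun a => (a : ZMod q))) j = 0}
      = q ^ (m - r) := by
  classical
  revert hq hco
  induction q using Nat.recOnPosPrimePosCoprime with
  | prime_pow p k hpp hk =>
    intro hq hco
    haveI : NeZero (p ^ k) := ⟨hq.ne'⟩
    have hprime : p.Prime := hpp
    have hnotall : ¬ ∀ pr : (Fin r → Fin m) × (Fin r → ν),
        p ∣ ((T.submatrix pr.1 pr.2).det).natAbs := by
      intro hall
      have h1 : p ∣ Finset.gcd Finset.univ
          (fun pr : (Fin r → Fin m) × (Fin r → ν) => ((T.submatrix pr.1 pr.2).det).natAbs) :=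
        Finset.dvd_gcd (fun x _ => hall x)
      have h2 : p ∣ Nat.gcd (p ^ k)
          (Finset.gcd Finset.univ
            (fun pr : (Fin r → Fin m) × (Fin r → ν) => ((T.submatrix pr.1 pr.2).det).natAbs)) :=
        Nat.dvd_gcd (dvd_pow_self p hk.ne') h1
      rw [Nat.Coprime.gcd_eq_one hco] at h2
      exact absurd (Nat.le_of_dvd one_pos h2) (Nat.not_le.mpr hprime.one_lt)
    push_neg at hnotall
    obtain ⟨⟨f, g⟩, hfg⟩ := hnotall
    have hcop : ((T.submatrix f g).det.natAbs).Coprime (p ^ k) :=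
      Nat.Coprime.pow_right k ((hprime.coprime_iff_not_dvd.mpr hfg).symm)
    have hu1 : IsUnit (((T.submatrix f g).det.natAbs : ZMod (p ^ k))) :=
      (ZMod.isUnit_iff_coprime _ _).mpr hcop
    have huInt : IsUnit (((T.submatrix f g).det : ZMod (p ^ k))) := by
      rcases Int.natAbs_eq (T.submatrix f g).det with he | he
      · rw [he, Int.cast_natCast]; exact hu1
      · rw [he, Int.cast_neg, Int.cast_natCast]; exact hu1.neg
    have hdetmap : ((T.map (fun a => (a : ZMod (p ^ k)))).submatrix f g).det
        = (((T.submatrix f g).det : ZMod (p ^ k))) := by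
      have h1 : (T.map (fun a => (a : ZMod (p ^ k)))).submatrix f g
          = (T.submatrix f g).map (fun a => (a : ZMod (p ^ k))) := by
        ext x y; rfl
      rw [h1]
      exact (RingHom.map_det (Int.castRingHom (ZMod (p ^ k))) (T.submatrix f g)).symm
    exact count_ker_of_unit_minor T hrm hminor f g (by rw [hdetmap]; exact huInt)
  | zero =>
    intro hq _
    exact absurd hq (lt_irrefl 0)
  | one =>
    intro _ _
    haveI : Unique {z : Fin m → ZMod 1 // ∀ j,
        Matrix.vecMul z (T.map (fun a => (a : ZMod 1))) j = 0} :=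
      { default := ⟨0, fun j => Subsingleton.elim _ _⟩
        uniq := fun a => Subtype.ext (Subsingleton.elim _ _) }
    rw [Nat.card_unique, one_pow]
  | coprime a b ha hb hab iha ihb =>
    intro hq hco
    rw [count_mul hab T]
    rw [iha (lt_trans one_pos ha) (Nat.Coprime.coprime_dvd_left (dvd_mul_right a b) hco),
      ihb (lt_trans one_pos hb) (Nat.Coprime.coprime_dvd_left (dvd_mul_left b a) hco),
      ← mul_pow]

lemma minors_vanish (T : Matrix (Fin m) ν ℤ) {r : ℕ} (hr : T.rank = r)
    (f : Fin (r+1) → Fin m) (g : Fin (r+1) → ν) :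
    (T.submatrix f g).det = 0 := by
  classical
  by_contra hd
  have hli : LinearIndependent ℤ (fun b : Fin (r+1) => (fun i => T i (g b) : Fin m → ℤ)) := by
    rw [Fintype.linearIndependent_iff]
    intro c hc
    have h0 : (T.submatrix f g) *ᵥ c = 0 := by
      funext a
      have h1 := congrFun hc (f a)
      simpa [Matrix.mulVec, dotProduct, Finset.sum_apply, mul_comm] using h1
    have hc0 : c = 0 := by
      by_contra hne
      exact hd (Matrix.exists_mulVec_eq_zero_iff.mp ⟨c, hne, h0⟩)
    intro b
    rw [hc0]
    rfl
  have hmem : ∀ b : Fin (r+1), (fun i => T i (g b)) ∈ LinearMap.range T.mulVecLin := by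
    intro b
    refine ⟨Pi.single (g b) 1, ?_⟩
    funext i
    simp [Matrix.mulVecLin_apply, Matrix.mulVec_single]
  have hli' : LinearIndependent ℤ
      (fun b : Fin (r+1) => (⟨fun i => T i (g b), hmem b⟩ : LinearMap.range T.mulVecLin)) := by
    apply LinearIndependent.of_comp (LinearMap.range T.mulVecLin).subtype
    exact hli
  haveI : Module.Finite ℤ (LinearMap.range T.mulVecLin) := inferInstance
  have hcard := hli'.fintype_card_le_finrank
  rw [Fintype.card_fin] at hcard
  have hrk : Module.finrank ℤ (LinearMap.range T.mulVecLin) = r := hr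
  omega

lemma dvd_chain (l : ℕ) (e : ℕ → ℕ) (hch : ∀ j, 1 ≤ j → j + 1 ≤ l → e j ∣ e (j+1)) :
    ∀ i k, 1 ≤ i → i ≤ k → k ≤ l → e i ∣ e k := by
  intro i k h1 hik hkl
  induction k with
  | zero => omega
  | succ k ih =>
    rcases eq_or_lt_of_le hik with he | hlt
    · rw [he]
    · have h2 : i ≤ k := by omega
      exact (ih h2 (by omega)).trans (hch k (by omega) (by omega))


/-- If `gcd(q, ρ₀) = 1`, where `ρ₀ = lcm{e(J) : ∅ ≠ J ⊆ [n]}` is the lcm period of `S`,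
then the number of `z ∈ (ℤ/qℤ)^m` with all entries of `z S` nonzero equals
`Σ_{J ⊆ [n]} (−1)^{|J|} q^{m−ℓ(J)}`, the value at `q` of the characteristic polynomial
of the real arrangement defined by the columns of `S`. -/
theorem stmt_1 (m n : ℕ) (hm : 0 < m) (hn : 0 < n)
    (S : Matrix (Fin m) (Fin n) ℤ) (hS : ∀ j, ∃ i, S i j ≠ 0)
    (ℓ : Finset (Fin n) → ℕ)
    (hℓ : ∀ J, ℓ J = (Matrix.of fun i (j : {j : Fin n // j ∈ J}) => S i j.1).rank)
    (e : Finset (Fin n) → ℕ → ℕ)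
    (hpos : ∀ J, ∀ j ∈ Finset.Icc 1 (ℓ J), 0 < e J j)
    (hchain : ∀ J, ∀ j, 1 ≤ j → j + 1 ≤ ℓ J → e J j ∣ e J (j + 1))
    (hsnf : ∀ J, ∀ k ≤ ℓ J, ∏ j ∈ Finset.Icc 1 k, e J j = detDivisor S J k)
    (ρ : ℕ)
    (hρ : ρ = Finset.lcm ((Finset.univ : Finset (Fin n)).powerset.filter (· ≠ ∅))
      (fun J => e J (ℓ J)))
    (q : ℕ) (hq : 0 < q) (hco : Nat.gcd q ρ = 1) :
    (chiCount m n q S : ℤ) =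
      ∑ J ∈ (Finset.univ : Finset (Fin n)).powerset,
        (-1) ^ J.card * (q : ℤ) ^ (m - ℓ J) := by
  classical
  haveI : NeZero q := ⟨hq.ne'⟩
  set S' : Matrix (Fin m) (Fin n) (ZMod q) := S.map (fun a => (a : ZMod q)) with hS'
  have hqρ : Nat.Coprime q ρ := hco
  have hcount : ∀ J : Finset (Fin n),
      Nat.card {z : Fin m → ZMod q // ∀ j ∈ J, Matrix.vecMul z S' j = 0} = q ^ (m - ℓ J) := by
    intro J
    set T : Matrix (Fin m) {j : Fin n // j ∈ J} ℤ :=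
      Matrix.of (fun i (j : {j : Fin n // j ∈ J}) => S i j.1) with hT
    have hrank : T.rank = ℓ J := (hℓ J).symm
    have hlm : ℓ J ≤ m := by
      rw [hℓ J]
      simpa using Matrix.rank_le_card_height (Matrix.of fun i (j : {j : Fin n // j ∈ J}) => S i j.1)
    have hcop : Nat.Coprime q (Finset.gcd Finset.univ
        (fun p : (Fin (ℓ J) → Fin m) × (Fin (ℓ J) → {j : Fin n // j ∈ J}) =>
          ((T.submatrix p.1 p.2).det).natAbs)) := by
      have hdd : (Finset.gcd Finset.univ
          (fun p : (Fin (ℓ J) → Fin m) × (Fin (ℓ J) → {j : Fin n // j ∈ J}) =>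
            ((T.submatrix p.1 p.2).det).natAbs)) = detDivisor S J (ℓ J) := rfl
      rw [hdd, ← hsnf J (ℓ J) le_rfl]
      apply Nat.Coprime.prod_right
      intro i hi
      rw [Finset.mem_Icc] at hi
      by_cases hJ : J = ∅
      · exfalso
        have hl0 : ℓ J = 0 := by
          rw [hℓ J]
          have h5 := Matrix.rank_le_card_width (Matrix.of fun i (j : {j : Fin n // j ∈ J}) => S i j.1)
          haveI : IsEmpty {j : Fin n // j ∈ J} := ⟨fun x => by
            rw [hJ] at x
            exact Finset.notMem_empty x.1 x.2⟩
          simpa using h5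
        omega
      · have hdvd1 : e J i ∣ e J (ℓ J) :=
          dvd_chain (ℓ J) (e J) (hchain J) i (ℓ J) hi.1 hi.2 le_rfl
        have hdvd2 : e J (ℓ J) ∣ ρ := by
          rw [hρ]
          exact Finset.dvd_lcm (Finset.mem_filter.mpr
            ⟨Finset.mem_powerset.mpr (Finset.subset_univ J), hJ⟩)
        exact Nat.Coprime.coprime_dvd_right (hdvd1.trans hdvd2) hqρ
    have heq := count_eq T hlm (minors_vanish T hrank) q hq hcop
    have hequiv : {z : Fin m → ZMod q // ∀ j ∈ J, Matrix.vecMul z S' j = 0}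
        ≃ {z : Fin m → ZMod q // ∀ j, Matrix.vecMul z (T.map (fun a => (a : ZMod q))) j = 0} :=
      Equiv.subtypeEquivRight (fun z => by
        constructor
        · intro h j
          exact h j.1 j.2
        · intro h j hj
          exact h ⟨j, hj⟩)
    rw [Nat.card_congr hequiv, heq]
  -- inclusion–exclusion
  have hchi : (chiCount m n q S : ℤ)
      = ∑ z : Fin m → ZMod q, (if ∀ j, Matrix.vecMul z S' j ≠ 0 then (1:ℤ) else 0) := by
    rw [chiCount, Nat.card_eq_fintype_card, Fintype.card_subtype, Finset.sum_boole]
  rw [hchi]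
  have hz : ∀ z : Fin m → ZMod q,
      (if ∀ j, Matrix.vecMul z S' j ≠ 0 then (1:ℤ) else 0)
      = ∑ J ∈ (Finset.univ : Finset (Fin n)).powerset,
          (if ∀ j ∈ J, Matrix.vecMul z S' j = 0 then ((-1:ℤ)) ^ J.card else 0) := by
    intro z
    set Z : Finset (Fin n) := Finset.univ.filter (fun j => Matrix.vecMul z S' j = 0) with hZ
    have h1 : ∀ J ∈ (Finset.univ : Finset (Fin n)).powerset,
        (if ∀ j ∈ J, Matrix.vecMul z S' j = 0 then ((-1:ℤ))^J.card else 0)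
        = (if J ⊆ Z then ((-1:ℤ))^J.card else 0) := by
      intro J _
      refine if_congr ?_ rfl rfl
      constructor
      · intro h j hj
        rw [hZ]
        exact Finset.mem_filter.mpr ⟨Finset.mem_univ j, h j hj⟩
      · intro h j hj
        exact (Finset.mem_filter.mp (h hj)).2
    rw [Finset.sum_congr rfl h1, ← Finset.sum_filter]
    have h2 : (Finset.univ : Finset (Fin n)).powerset.filter (· ⊆ Z) = Z.powerset := by
      ext J
      simp [Finset.mem_powerset]
    rw [h2, Finset.sum_powerset_neg_one_pow_card]
    refine if_congr ?_ rfl rfl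
    constructor
    · intro h
      rw [hZ, Finset.filter_eq_empty_iff]
      intro j _
      exact h j
    · intro h j
      intro hj0
      have : j ∈ Z := Finset.mem_filter.mpr ⟨Finset.mem_univ j, hj0⟩
      rw [h] at this
      exact Finset.notMem_empty j this
  rw [Finset.sum_congr rfl (fun z _ => hz z), Finset.sum_comm]
  apply Finset.sum_congr rfl
  intro J _
  have h3 : ∀ z : Fin m → ZMod q,
      (if (∀ j ∈ J, Matrix.vecMul z S' j = 0) then ((-1:ℤ))^J.card else 0)
      = ((-1:ℤ))^J.card * (if (∀ j ∈ J, Matrix.vecMul z S' j = 0) then (1:ℤ) else 0) := by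
    intro z
    split <;> ring
  rw [Finset.sum_congr rfl (fun z _ => h3 z), ← Finset.mul_sum, Finset.sum_boole]
  have h4 := hcount J
  rw [Nat.card_eq_fintype_card, Fintype.card_subtype] at h4
  have h5 : ((Finset.univ.filter
      (fun z : Fin m → ZMod q => ∀ j ∈ J, Matrix.vecMul z S' j = 0)).card : ℤ)
      = ((q : ℤ)) ^ (m - ℓ J) := by
    rw [Finset.filter_congr_decidable] at h4 ⊢
    rw [h4]
    push_cast
    rfl
  rw [h5]
end

section
/- (Corollary 2.3) Let S be an m×n integer matrix with no zero column, with lcm period ρ₀, and let d, d' be positive divisors of ρ₀. Suppose that for some positive integer s one has gcd(e(J), d) = gcd(e(J), d') for all nonempty J ⊆ [n] with |J| ≤ s. Then the polynomial P_d(t) − P_{d'}(t) has degree strictly less than m − s. In particular, if gcd(e(J), d) = 1 for all nonempty J with |J| ≤ s, then deg(P_d(t) − P_1(t)) < m − s. -/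
namespace Cor23

variable {m n : ℕ} (S : Matrix (Fin m) (Fin n) ℤ)

lemma detDivisor_dvd (J : Finset (Fin n)) (k : ℕ) (r : Fin k → Fin m)
    (c : Fin k → {j : Fin n // j ∈ J}) :
    detDivisor S J k ∣ (Matrix.det (Matrix.of fun a b => S (r a) (c b).1)).natAbs :=
  Finset.gcd_dvd (Finset.mem_univ (r, c))

lemma dvd_detDivisor (J : Finset (Fin n)) (k : ℕ) (x : ℕ)
    (h : ∀ (r : Fin k → Fin m) (c : Fin k → {j : Fin n // j ∈ J}),
      x ∣ (Matrix.det (Matrix.of fun a b => S (r a) (c b).1)).natAbs) :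
    x ∣ detDivisor S J k :=
  Finset.dvd_gcd fun p _ => h p.1 p.2

lemma detDivisor_anti {J₁ J₂ : Finset (Fin n)} (h : J₁ ⊆ J₂) (k : ℕ) :
    detDivisor S J₂ k ∣ detDivisor S J₁ k := by
  refine dvd_detDivisor S _ _ _ fun r c => ?_
  exact detDivisor_dvd S J₂ k r (fun b => ⟨(c b).1, h (c b).2⟩)

lemma exists_minor_not_dvd {J : Finset (Fin n)} {k x : ℕ}
    (h : ¬ x ∣ detDivisor S J k) :
    ∃ (r : Fin k → Fin m) (c : Fin k → {j : Fin n // j ∈ J}),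
      ¬ x ∣ (Matrix.det (Matrix.of fun a b => S (r a) (c b).1)).natAbs := by
  by_contra hc
  push_neg at hc
  exact h (dvd_detDivisor S _ _ _ hc)

lemma exists_minor_ne_zero_of_ne_zero {J : Finset (Fin n)} {k : ℕ}
    (h : detDivisor S J k ≠ 0) :
    ∃ (r : Fin k → Fin m) (c : Fin k → {j : Fin n // j ∈ J}),
      (Matrix.det (Matrix.of fun a b => S (r a) (c b).1)).natAbs ≠ 0 := by
  rw [detDivisor, Ne, Finset.gcd_eq_zero_iff] at h
  push_neg at h
  obtain ⟨⟨r, c⟩, -, hrc⟩ := h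
  exact ⟨r, c, hrc⟩

lemma minor_eq_zero_of_detDivisor_eq_zero {J : Finset (Fin n)} {k : ℕ}
    (h : detDivisor S J k = 0) (r : Fin k → Fin m) (c : Fin k → {j : Fin n // j ∈ J}) :
    (Matrix.det (Matrix.of fun a b => S (r a) (c b).1)).natAbs = 0 := by
  rw [detDivisor, Finset.gcd_eq_zero_iff] at h
  exact h (r, c) (Finset.mem_univ _)

lemma col_inj {J : Finset (Fin n)} {k : ℕ} {r : Fin k → Fin m}
    {c : Fin k → {j : Fin n // j ∈ J}}
    (h : (Matrix.det (Matrix.of fun a b => S (r a) (c b).1)).natAbs ≠ 0) :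
    Function.Injective c := by
  intro b b' hbb
  by_contra hne
  refine h ?_
  rw [Matrix.det_zero_of_column_eq hne fun a => ?_, Int.natAbs_zero]
  show S (r a) (c b).1 = S (r a) (c b').1
  rw [hbb]

lemma exists_subset_detDivisor {J : Finset (Fin n)} {k : ℕ}
    (r : Fin k → Fin m) (c : Fin k → {j : Fin n // j ∈ J})
    (h : (Matrix.det (Matrix.of fun a b => S (r a) (c b).1)).natAbs ≠ 0) :
    ∃ J' : Finset (Fin n), J' ⊆ J ∧ J'.card = k ∧
      detDivisor S J' k ∣ (Matrix.det (Matrix.of fun a b => S (r a) (c b).1)).natAbs := by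
  have hinj : Function.Injective c := col_inj S h
  refine ⟨Finset.univ.image (fun b => (c b).1), ?_, ?_, ?_⟩
  · intro x hx
    simp only [Finset.mem_image] at hx
    obtain ⟨b, -, rfl⟩ := hx
    exact (c b).2
  · have hinj2 : Function.Injective (fun b : Fin k => (c b).1) :=
      fun b b' hb => hinj (Subtype.ext hb)
    rw [Finset.card_image_of_injective _ hinj2, Finset.card_univ, Fintype.card_fin]
  · have h2 := detDivisor_dvd S (Finset.univ.image (fun b : Fin k => (c b).1)) k r
      (fun b => ⟨(c b).1, Finset.mem_image_of_mem _ (Finset.mem_univ b)⟩)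
    convert h2 using 2

lemma detDivisor_eq_zero_of_card_lt {J : Finset (Fin n)} {k : ℕ} (h : J.card < k) :
    detDivisor S J k = 0 := by
  rw [detDivisor, Finset.gcd_eq_zero_iff]
  rintro ⟨r, c⟩ -
  have hni : ¬ Function.Injective c := by
    intro hc
    have := Fintype.card_le_of_injective c hc
    simp only [Fintype.card_fin, Fintype.card_coe] at this
    omega
  rw [Function.not_injective_iff] at hni
  obtain ⟨b, b', hbb, hne⟩ := hni
  simp only
  rw [Matrix.det_zero_of_column_eq hne fun a => ?_, Int.natAbs_zero]
  show S (r a) (c b).1 = S (r a) (c b').1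
  rw [hbb]


open Module Submodule Matrix




/-- From a nonzero square minor (row selection), columns are linearly independent. -/
lemma linearIndependent_of_minor {k : ℕ} (v : Fin k → (Fin m → ℚ)) (r : Fin k → Fin m)
    (h : (Matrix.of fun a b => v b (r a)).det ≠ 0) :
    LinearIndependent ℚ v := by
  have hu : IsUnit (Matrix.of fun a b => v b (r a)) :=
    (Matrix.isUnit_iff_isUnit_det _).mpr (isUnit_iff_ne_zero.mpr h)
  have hcols : LinearIndependent ℚ (fun b => (Matrix.of fun a b => v b (r a))ᵀ b) :=
    Matrix.linearIndependent_cols_iff_isUnit.mpr hu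
  apply LinearIndependent.of_comp (LinearMap.funLeft ℚ ℚ r)
  convert hcols using 1
  funext b a
  rfl

/-- Linearly independent columns admit a nonzero square minor. -/
lemma exists_minor_ne_zero {k : ℕ} (v : Fin k → (Fin m → ℚ))
    (hv : LinearIndependent ℚ v) :
    ∃ r : Fin k → Fin m, (Matrix.of fun a b => v b (r a)).det ≠ 0 := by
  classical
  set A : Matrix (Fin m) (Fin k) ℚ := Matrix.of fun i b => v b i with hA
  have hAT : Aᵀ = v := rfl
  have hrankA : A.rank = k := by
    have hAc : A.col = v := rfl
    rw [Matrix.rank_eq_finrank_span_cols, hAc, finrank_span_eq_card hv, Fintype.card_fin]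
  have h1 : Module.finrank ℚ (Submodule.span ℚ (Set.range A)) = k := by
    have h2 := Matrix.rank_eq_finrank_span_cols Aᵀ
    rw [Matrix.rank_transpose, hrankA] at h2
    exact h2.symm
  have hrows : Submodule.span ℚ (Set.range A) = ⊤ := by
    apply Submodule.eq_top_of_finrank_eq
    rw [h1, Module.finrank_pi, Fintype.card_fin]
  obtain ⟨b, hbsub, hbspan, hbind⟩ := exists_linearIndependent ℚ (Set.range A)
  rw [hrows] at hbspan
  haveI : Fintype b := ((Set.finite_range A).subset hbsub).fintype
  have hbasis : Basis b ℚ (Fin k → ℚ) :=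
    Basis.mk hbind (by rw [Subtype.range_coe]; exact hbspan.symm ▸ le_rfl)
  have hcard : Fintype.card b = k := by
    have := Module.finrank_eq_card_basis hbasis
    rw [Module.finrank_pi, Fintype.card_fin] at this
    omega
  set eb : Fin k ≃ b := (Fintype.equivFinOfCardEq hcard).symm with heb
  have hpick : ∀ a : Fin k, ∃ i : Fin m, A i = (eb a : Fin k → ℚ) := by
    intro a
    obtain ⟨i, hi⟩ := hbsub (eb a).2
    exact ⟨i, hi⟩
  choose r hr using hpick
  refine ⟨r, ?_⟩
  have hrows' : (fun a : Fin k => (Matrix.of fun a b => v b (r a)) a) =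
      fun a => (eb a : Fin k → ℚ) := by
    funext a
    have : (Matrix.of fun a b => v b (r a)) a = A (r a) := by
      funext b'; rfl
    rw [this, hr a]
  have hind : LinearIndependent ℚ (fun a : Fin k => (Matrix.of fun a b => v b (r a)) a) := by
    rw [hrows']
    exact hbind.comp eb eb.injective
  have hu : IsUnit (Matrix.of fun a b => v b (r a)) :=
    Matrix.linearIndependent_rows_iff_isUnit.mp hind
  intro hdet
  rw [Matrix.isUnit_iff_isUnit_det, hdet, isUnit_zero_iff] at hu
  exact one_ne_zero hu.symm




/-- Componentwise cast `ℤ^m → ℚ^m` as a `ℤ`-linear map. -/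
def castL (m : ℕ) : (Fin m → ℤ) →ₗ[ℤ] (Fin m → ℚ) where
  toFun f := fun i => (f i : ℚ)
  map_add' f g := by funext i; simp
  map_smul' z f := by funext i; simp [zsmul_eq_mul]

lemma li_int_of_li_rat {ι : Type*} (w : ι → (Fin m → ℤ))
    (h : LinearIndependent ℚ (fun j => (castL m) (w j))) :
    LinearIndependent ℤ w := by
  have h2 : LinearIndependent ℤ (fun j => (castL m) (w j)) := by
    apply h.restrict_scalars
    intro x y hxy
    simpa using hxy
  exact LinearIndependent.of_comp (castL m) h2


lemma cast_det_ne_zero {k : ℕ} (M : Matrix (Fin k) (Fin k) ℤ) (h : M.det.natAbs ≠ 0) :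
    (M.map (fun x : ℤ => (x : ℚ))).det ≠ 0 := by
  show ((Int.castRingHom ℚ).mapMatrix M).det ≠ 0
  rw [← RingHom.map_det]
  intro hh
  have : M.det = 0 := by
    have h2 : ((M.det : ℤ) : ℚ) = 0 := hh
    exact_mod_cast h2
  exact h (Int.natAbs_eq_zero.mpr this)

lemma rank_eq_of_card {J : Finset (Fin n)} {k : ℕ}
    (hcard : J.card = k) (hD : detDivisor S J k ≠ 0) :
    (Matrix.of fun i (j : {j : Fin n // j ∈ J}) => S i j.1).rank = k := by
  classical
  obtain ⟨r, c, hm⟩ := exists_minor_ne_zero_of_ne_zero S hD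
  have hinj : Function.Injective c := col_inj S hm
  have hbij : Function.Bijective c := by
    rw [Fintype.bijective_iff_injective_and_card]
    exact ⟨hinj, by simp [Fintype.card_coe, hcard]⟩
  set vQ : {j : Fin n // j ∈ J} → (Fin m → ℚ) := fun j i => (S i j.1 : ℚ) with hvQ
  have hdetQ : (Matrix.of fun a b => vQ (c b) (r a)).det ≠ 0 := by
    have he : (Matrix.of fun a b => vQ (c b) (r a)) =
        (Matrix.of fun a b => S (r a) (c b).1).map (fun x : ℤ => (x : ℚ)) := rfl
    rw [he]
    exact cast_det_ne_zero _ hm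
  have h1 : LinearIndependent ℚ (fun b => vQ (c b)) := linearIndependent_of_minor _ r hdetQ
  have h2 : LinearIndependent ℚ vQ :=
    (linearIndependent_equiv (Equiv.ofBijective c hbij)).mp h1
  have h3 : LinearIndependent ℤ (fun j : {j : Fin n // j ∈ J} => fun i : Fin m => S i j.1) :=
    li_int_of_li_rat _ h2
  apply le_antisymm
  · have hle := Matrix.rank_le_card_width (Matrix.of fun i (j : {j : Fin n // j ∈ J}) => S i j.1)
    rwa [Fintype.card_coe, hcard] at hle
  · rw [Matrix.rank_eq_finrank_span_cols]
    have h4 := finrank_span_eq_card h3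
    rw [Fintype.card_coe, hcard] at h4
    exact h4.ge

lemma exists_extension {J'' J : Finset (Fin n)} {k₀ : ℕ}
    (hsub : J'' ⊆ J) (hcard : J''.card = k₀)
    (hD'' : detDivisor S J'' k₀ ≠ 0) (hDJ : detDivisor S J (k₀ + 1) ≠ 0) :
    ∃ j ∈ J, j ∉ J'' ∧ detDivisor S (insert j J'') (k₀ + 1) ≠ 0 := by
  classical
  by_contra hno
  push_neg at hno
  obtain ⟨r'', c'', hm''⟩ := exists_minor_ne_zero_of_ne_zero S hD''
  have hinj'' : Function.Injective c'' := col_inj S hm''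
  have hbij'' : Function.Bijective c'' := by
    rw [Fintype.bijective_iff_injective_and_card]
    exact ⟨hinj'', by simp [Fintype.card_coe, hcard]⟩
  set w : Fin k₀ → (Fin m → ℚ) := fun b i => (S i (c'' b).1 : ℚ) with hw
  have hdet'' : (Matrix.of fun a b => w b (r'' a)).det ≠ 0 := by
    have he : (Matrix.of fun a b => w b (r'' a)) =
        (Matrix.of fun a b => S (r'' a) (c'' b).1).map (fun x : ℤ => (x : ℚ)) := rfl
    rw [he]
    exact cast_det_ne_zero _ hm''
  have hwli : LinearIndependent ℚ w := linearIndependent_of_minor w r'' hdet''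
  set W := Submodule.span ℚ (Set.range w) with hWdef
  have hcol : ∀ j ∈ J, (fun i => (S i j : ℚ)) ∈ W := by
    intro j hj
    by_cases hjJ'' : j ∈ J''
    · obtain ⟨b, hb⟩ := hbij''.2 ⟨j, hjJ''⟩
      apply Submodule.subset_span
      refine ⟨b, ?_⟩
      rw [hw]
      simp only
      rw [hb]
    · have hzero := hno j hj hjJ''
      by_contra hjW
      have hsnoc : LinearIndependent ℚ
          (Fin.snoc w (fun i => (S i j : ℚ)) : Fin (k₀ + 1) → (Fin m → ℚ)) :=
        linearIndependent_fin_snoc.mpr ⟨hwli, hjW⟩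
      obtain ⟨r, hr⟩ := exists_minor_ne_zero _ hsnoc
      apply hr
      set c : Fin (k₀ + 1) → {x : Fin n // x ∈ insert j J''} :=
        Fin.snoc (fun b => ⟨(c'' b).1, Finset.mem_insert_of_mem (c'' b).2⟩)
          ⟨j, Finset.mem_insert_self _ _⟩ with hc
      have hmat : (Matrix.of fun a b =>
            (Fin.snoc w (fun i => (S i j : ℚ)) : Fin (k₀ + 1) → (Fin m → ℚ)) b (r a)) =
          (Matrix.of fun a b => S (r a) (c b).1).map (fun x : ℤ => (x : ℚ)) := by
        funext a b
        simp only [Matrix.of_apply, Matrix.map_apply]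
        refine Fin.lastCases ?_ ?_ b
        · rw [hc]
          simp [Fin.snoc_last]
        · intro b'
          rw [hc, hw]
          simp [Fin.snoc_castSucc]
      rw [hmat]
      show ((Int.castRingHom ℚ).mapMatrix (Matrix.of fun a b => S (r a) (c b).1)).det = 0
      rw [← RingHom.map_det]
      have hz := minor_eq_zero_of_detDivisor_eq_zero S hzero r c
      rw [Int.natAbs_eq_zero] at hz
      rw [hz]
      simp
  obtain ⟨r₀, c₀, hm₀⟩ := exists_minor_ne_zero_of_ne_zero S hDJ
  set u : Fin (k₀ + 1) → (Fin m → ℚ) := fun b i => (S i (c₀ b).1 : ℚ) with hu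
  have hdet₀ : (Matrix.of fun a b => u b (r₀ a)).det ≠ 0 := by
    have he : (Matrix.of fun a b => u b (r₀ a)) =
        (Matrix.of fun a b => S (r₀ a) (c₀ b).1).map (fun x : ℤ => (x : ℚ)) := rfl
    rw [he]
    exact cast_det_ne_zero _ hm₀
  have huli : LinearIndependent ℚ u := linearIndependent_of_minor u r₀ hdet₀
  have hspan : Submodule.span ℚ (Set.range u) ≤ W := by
    rw [Submodule.span_le]
    rintro x ⟨b, rfl⟩
    exact hcol (c₀ b).1 (c₀ b).2
  have e1 : Module.finrank ℚ (Submodule.span ℚ (Set.range u)) = k₀ + 1 := by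
    rw [finrank_span_eq_card huli, Fintype.card_fin]
  have e2 : Module.finrank ℚ W ≤ k₀ := by
    have h5 := finrank_range_le_card (R := ℚ) w
    rw [Fintype.card_fin] at h5
    exact h5
  have e3 : Module.finrank ℚ (Submodule.span ℚ (Set.range u)) ≤ Module.finrank ℚ W :=
    Submodule.finrank_mono hspan
  omega

lemma gcd_eq_gcd_gcd {a b x : ℕ} (hab : a ∣ b) : Nat.gcd a x = Nat.gcd a (Nat.gcd b x) :=
  Nat.dvd_antisymm
    (Nat.dvd_gcd (Nat.gcd_dvd_left _ _)
      (Nat.dvd_gcd ((Nat.gcd_dvd_left a x).trans hab) (Nat.gcd_dvd_right _ _)))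
    (Nat.dvd_gcd (Nat.gcd_dvd_left _ _)
      ((Nat.gcd_dvd_right a _).trans (Nat.gcd_dvd_right b x)))

lemma e_dvd_top (ℓ : Finset (Fin n) → ℕ) (e : Finset (Fin n) → ℕ → ℕ)
    (hchain : ∀ J, ∀ j, 1 ≤ j → j + 1 ≤ ℓ J → e J j ∣ e J (j + 1))
    (J : Finset (Fin n)) {j : ℕ} (h1 : 1 ≤ j) (h2 : j ≤ ℓ J) : e J j ∣ e J (ℓ J) := by
  have key : ∀ t, j + t ≤ ℓ J → e J j ∣ e J (j + t) := by
    intro t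
    induction t with
    | zero => intro _; exact dvd_rfl
    | succ t ih =>
      intro h
      exact (ih (by omega)).trans (hchain J (j + t) (by omega) (by omega))
  have h3 := key (ℓ J - j) (by omega)
  rwa [Nat.add_sub_cancel' h2] at h3

lemma key_prime (ℓ : Finset (Fin n) → ℕ)
    (hℓ : ∀ J, ℓ J = (Matrix.of fun i (j : {j : Fin n // j ∈ J}) => S i j.1).rank)
    (e : Finset (Fin n) → ℕ → ℕ)
    (hpos : ∀ J, ∀ j ∈ Finset.Icc 1 (ℓ J), 0 < e J j)
    (hsnf : ∀ J, ∀ k ≤ ℓ J, ∏ j ∈ Finset.Icc 1 k, e J j = detDivisor S J k)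
    {d d' s : ℕ} (hd : 0 < d) (hd' : 0 < d')
    (H : ∀ J : Finset (Fin n), J.Nonempty → J.card ≤ s →
        Nat.gcd (e J (ℓ J)) d = Nat.gcd (e J (ℓ J)) d')
    (J : Finset (Fin n)) {k₀ : ℕ} (hk : ℓ J = k₀ + 1) (hks : ℓ J ≤ s)
    (p : ℕ) (hlt : d.factorization p < d'.factorization p) :
    (e J (ℓ J)).factorization p ≤ d.factorization p := by
  classical
  by_cases hp : p.Prime
  swap
  · rw [Nat.factorization_eq_zero_of_not_prime d hp,
      Nat.factorization_eq_zero_of_not_prime d' hp] at hlt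
    omega
  have hDpos : ∀ (K : Finset (Fin n)) (k : ℕ), k ≤ ℓ K → detDivisor S K k ≠ 0 := by
    intro K k hkle
    rw [← hsnf K k hkle]
    exact (Finset.prod_pos fun j hj => hpos K j (by
      simp only [Finset.mem_Icc] at hj ⊢; omega)).ne'
  set v := (detDivisor S J k₀).factorization p with hv
  have hD0 : detDivisor S J k₀ ≠ 0 := hDpos J k₀ (by omega)
  have hD1 : detDivisor S J (k₀ + 1) ≠ 0 := hDpos J (k₀ + 1) (by omega)
  have hnd : ¬ p ^ (v + 1) ∣ detDivisor S J k₀ := by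
    rw [Nat.Prime.pow_dvd_iff_le_factorization hp hD0]
    omega
  obtain ⟨r'', c'', hm''⟩ := exists_minor_not_dvd S hnd
  have hm''ne : (Matrix.det (Matrix.of fun a b => S (r'' a) (c'' b).1)).natAbs ≠ 0 := by
    intro h0
    rw [h0] at hm''
    exact hm'' (dvd_zero _)
  obtain ⟨J'', hJ''sub, hJ''card, hJ''dvd⟩ := exists_subset_detDivisor S r'' c'' hm''ne
  have hD''ne : detDivisor S J'' k₀ ≠ 0 :=
    fun h0 => hm''ne (Nat.eq_zero_of_zero_dvd (h0 ▸ hJ''dvd))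
  have hD''le : (detDivisor S J'' k₀).factorization p ≤ v := by
    by_contra hgt
    push_neg at hgt
    have hdd : p ^ (v + 1) ∣ detDivisor S J'' k₀ := by
      rw [Nat.Prime.pow_dvd_iff_le_factorization hp hD''ne]
      omega
    exact hm'' (hdd.trans hJ''dvd)
  obtain ⟨j, hjJ, hjJ'', hD'ne⟩ := exists_extension S hJ''sub hJ''card hD''ne hD1
  have hJ'card : (insert j J'').card = k₀ + 1 := by
    rw [Finset.card_insert_of_notMem hjJ'', hJ''card]
  have hJ'sub : insert j J'' ⊆ J := Finset.insert_subset hjJ hJ''sub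
  have hrank : ℓ (insert j J'') = k₀ + 1 := by
    rw [hℓ (insert j J'')]
    exact rank_eq_of_card S hJ'card hD'ne
  have hsplit : ∀ K : Finset (Fin n), ℓ K = k₀ + 1 →
      detDivisor S K (k₀ + 1) = detDivisor S K k₀ * e K (k₀ + 1) := by
    intro K hK
    rw [← hsnf K (k₀ + 1) (by omega), ← hsnf K k₀ (by omega),
      Finset.prod_Icc_succ_top (by omega)]
  have hprod := hsplit J hk
  have hprod' := hsplit (insert j J'') hrank
  have ha : e J (k₀ + 1) ≠ 0 := (hpos J (k₀ + 1) (by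
    simp only [Finset.mem_Icc]; omega)).ne'
  have hb : e (insert j J'') (k₀ + 1) ≠ 0 := (hpos (insert j J'') (k₀ + 1) (by
    simp only [Finset.mem_Icc]; omega)).ne'
  have hne : (insert j J'').Nonempty := ⟨j, Finset.mem_insert_self _ _⟩
  have hH := H (insert j J'') hne (by omega)
  rw [hrank] at hH
  have hβ : (e (insert j J'') (k₀ + 1)).factorization p ≤ d.factorization p := by
    have h1 := congrArg (fun x => x.factorization p) hH
    rw [Nat.factorization_gcd hb hd.ne', Nat.factorization_gcd hb hd'.ne',
      Finsupp.inf_apply, Finsupp.inf_apply] at h1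
    omega
  have hdvd1 : detDivisor S J (k₀ + 1) ∣ detDivisor S (insert j J'') (k₀ + 1) :=
    detDivisor_anti S hJ'sub _
  have hdvd2 : detDivisor S (insert j J'') k₀ ∣ detDivisor S J'' k₀ :=
    detDivisor_anti S (Finset.subset_insert j J'') _
  have hD'0ne : detDivisor S (insert j J'') k₀ ≠ 0 :=
    fun h0 => hD''ne (Nat.eq_zero_of_zero_dvd (h0 ▸ hdvd2))
  have f1 : (detDivisor S J (k₀ + 1)).factorization p = v + (e J (k₀ + 1)).factorization p := by
    rw [hprod, Nat.factorization_mul hD0 ha, Finsupp.add_apply]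
  have f2 : (detDivisor S J (k₀ + 1)).factorization p ≤
      (detDivisor S (insert j J'') (k₀ + 1)).factorization p :=
    Finsupp.le_def.mp ((Nat.factorization_le_iff_dvd hD1 hD'ne).mpr hdvd1) p
  have f3 : (detDivisor S (insert j J'') (k₀ + 1)).factorization p =
      (detDivisor S (insert j J'') k₀).factorization p +
        (e (insert j J'') (k₀ + 1)).factorization p := by
    rw [hprod', Nat.factorization_mul hD'0ne hb, Finsupp.add_apply]
  have f4 : (detDivisor S (insert j J'') k₀).factorization p ≤
      (detDivisor S J'' k₀).factorization p :=
    Finsupp.le_def.mp ((Nat.factorization_le_iff_dvd hD'0ne hD''ne).mpr hdvd2) p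
  rw [hk]
  omega

lemma key_gcd (ℓ : Finset (Fin n) → ℕ)
    (hℓ : ∀ J, ℓ J = (Matrix.of fun i (j : {j : Fin n // j ∈ J}) => S i j.1).rank)
    (e : Finset (Fin n) → ℕ → ℕ)
    (hpos : ∀ J, ∀ j ∈ Finset.Icc 1 (ℓ J), 0 < e J j)
    (hsnf : ∀ J, ∀ k ≤ ℓ J, ∏ j ∈ Finset.Icc 1 k, e J j = detDivisor S J k)
    {d d' s : ℕ} (hd : 0 < d) (hd' : 0 < d')
    (H : ∀ J : Finset (Fin n), J.Nonempty → J.card ≤ s →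
        Nat.gcd (e J (ℓ J)) d = Nat.gcd (e J (ℓ J)) d')
    (J : Finset (Fin n)) (h1 : 1 ≤ ℓ J) (hks : ℓ J ≤ s) :
    Nat.gcd (e J (ℓ J)) d = Nat.gcd (e J (ℓ J)) d' := by
  have ha : e J (ℓ J) ≠ 0 := (hpos J (ℓ J) (by simp only [Finset.mem_Icc]; omega)).ne'
  have hg1 : Nat.gcd (e J (ℓ J)) d ≠ 0 := fun h0 => ha (Nat.eq_zero_of_gcd_eq_zero_left h0)
  have hg2 : Nat.gcd (e J (ℓ J)) d' ≠ 0 := fun h0 => ha (Nat.eq_zero_of_gcd_eq_zero_left h0)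
  obtain ⟨k₀, hk⟩ : ∃ k₀, ℓ J = k₀ + 1 := ⟨ℓ J - 1, by omega⟩
  apply Nat.factorization_inj hg1 hg2
  rw [Nat.factorization_gcd ha hd.ne', Nat.factorization_gcd ha hd'.ne']
  apply Finsupp.ext
  intro p
  rw [Finsupp.inf_apply, Finsupp.inf_apply]
  rcases lt_trichotomy (d.factorization p) (d'.factorization p) with h | h | h
  · have := key_prime S ℓ hℓ e hpos hsnf hd hd' H J hk hks p h
    omega
  · rw [h]
  · have Hsymm : ∀ K : Finset (Fin n), K.Nonempty → K.card ≤ s →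
        Nat.gcd (e K (ℓ K)) d' = Nat.gcd (e K (ℓ K)) d := fun K a b => (H K a b).symm
    have := key_prime S ℓ hℓ e hpos hsnf hd' hd Hsymm J hk hks p h
    omega

end Cor23

/-- The constituent `P_d(t) = Σ_{J ⊆ [n]} (−1)^{|J|} e(J, d) t^{m−ℓ(J)}` of the
characteristic quasi-polynomial, where `e(J, d) = ∏_{j=1}^{ℓ(J)} gcd(e_{J,j}, d)`. -/
noncomputable def Ppoly (m n : ℕ) (ℓ : Finset (Fin n) → ℕ)
    (e : Finset (Fin n) → ℕ → ℕ) (d : ℕ) : Polynomial ℤ :=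
  ∑ J ∈ (Finset.univ : Finset (Fin n)).powerset,
    Polynomial.C ((-1) ^ J.card * ∏ j ∈ Finset.Icc 1 (ℓ J), (Nat.gcd (e J j) d : ℤ)) *
      Polynomial.X ^ (m - ℓ J)

/-- Corollary 2.3: if `d, d'` are positive divisors of the lcm period `ρ₀` and, for some
positive integer `s`, `gcd(e(J), d) = gcd(e(J), d')` for all nonempty `J` with `|J| ≤ s`,
then `deg (P_d − P_{d'}) < m − s`.  In particular, if `gcd(e(J), d) = 1` for all nonempty
`J` with `|J| ≤ s`, then `deg (P_d − P_1) < m − s`. -/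
theorem stmt_2 (m n : ℕ) (hm : 0 < m) (hn : 0 < n)
    (S : Matrix (Fin m) (Fin n) ℤ) (hS : ∀ j, ∃ i, S i j ≠ 0)
    (ℓ : Finset (Fin n) → ℕ)
    (hℓ : ∀ J, ℓ J = (Matrix.of fun i (j : {j : Fin n // j ∈ J}) => S i j.1).rank)
    (e : Finset (Fin n) → ℕ → ℕ)
    (hpos : ∀ J, ∀ j ∈ Finset.Icc 1 (ℓ J), 0 < e J j)
    (hchain : ∀ J, ∀ j, 1 ≤ j → j + 1 ≤ ℓ J → e J j ∣ e J (j + 1))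
    (hsnf : ∀ J, ∀ k ≤ ℓ J, ∏ j ∈ Finset.Icc 1 k, e J j = detDivisor S J k)
    (ρ : ℕ)
    (hρ : ρ = Finset.lcm ((Finset.univ : Finset (Fin n)).powerset.filter (· ≠ ∅))
      (fun J => e J (ℓ J)))
    (d d' : ℕ) (hd : 0 < d) (hd' : 0 < d') (hdρ : d ∣ ρ) (hd'ρ : d' ∣ ρ)
    (s : ℕ) (hs : 0 < s) :
    ((∀ J : Finset (Fin n), J.Nonempty → J.card ≤ s →
        Nat.gcd (e J (ℓ J)) d = Nat.gcd (e J (ℓ J)) d') →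
      (Ppoly m n ℓ e d - Ppoly m n ℓ e d').degree < ((m - s : ℕ) : WithBot ℕ)) ∧
    ((∀ J : Finset (Fin n), J.Nonempty → J.card ≤ s → Nat.gcd (e J (ℓ J)) d = 1) →
      (Ppoly m n ℓ e d - Ppoly m n ℓ e 1).degree < ((m - s : ℕ) : WithBot ℕ)) := by
  classical
  have main : ∀ d₁ d₂ : ℕ, 0 < d₁ → 0 < d₂ →
      (∀ K : Finset (Fin n), K.Nonempty → K.card ≤ s →
        Nat.gcd (e K (ℓ K)) d₁ = Nat.gcd (e K (ℓ K)) d₂) →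
      (Ppoly m n ℓ e d₁ - Ppoly m n ℓ e d₂).degree < ((m - s : ℕ) : WithBot ℕ) := by
    intro d₁ d₂ h₁ h₂ H
    rw [Ppoly, Ppoly, ← Finset.sum_sub_distrib]
    refine lt_of_le_of_lt (Polynomial.degree_sum_le _ _) ?_
    rw [Finset.sup_lt_iff (by exact WithBot.bot_lt_coe _)]
    intro J _
    by_cases hcase : ℓ J ≤ s
    · have hprodeq : (∏ j ∈ Finset.Icc 1 (ℓ J), (Nat.gcd (e J j) d₁ : ℤ)) =
          ∏ j ∈ Finset.Icc 1 (ℓ J), (Nat.gcd (e J j) d₂ : ℤ) := by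
        rcases Nat.eq_zero_or_pos (ℓ J) with h0 | h1
        · rw [h0]
          simp
        · apply Finset.prod_congr rfl
          intro j hj
          simp only [Finset.mem_Icc] at hj
          have hdvd := Cor23.e_dvd_top ℓ e hchain J hj.1 hj.2
          have htop := Cor23.key_gcd S ℓ hℓ e hpos hsnf h₁ h₂ H J h1 hcase
          norm_cast
          rw [Cor23.gcd_eq_gcd_gcd hdvd, htop, ← Cor23.gcd_eq_gcd_gcd hdvd]
      rw [hprodeq, sub_self, Polynomial.degree_zero]
      exact WithBot.bot_lt_coe _
    · push_neg at hcase
      have hm' : ℓ J ≤ m := by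
        rw [hℓ J]
        have h2 := Matrix.rank_le_card_height
          (Matrix.of fun i (j : {j : Fin n // j ∈ J}) => S i j.1)
        rwa [Fintype.card_fin] at h2
      have hdeg : (Polynomial.C ((-1) ^ J.card * ∏ j ∈ Finset.Icc 1 (ℓ J),
            (Nat.gcd (e J j) d₁ : ℤ)) * Polynomial.X ^ (m - ℓ J) -
          Polynomial.C ((-1) ^ J.card * ∏ j ∈ Finset.Icc 1 (ℓ J),
            (Nat.gcd (e J j) d₂ : ℤ)) * Polynomial.X ^ (m - ℓ J)).degree ≤
          ((m - ℓ J : ℕ) : WithBot ℕ) := by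
        rw [← sub_mul, ← Polynomial.C_sub]
        exact Polynomial.degree_C_mul_X_pow_le _ _
      refine lt_of_le_of_lt hdeg ?_
      have hlt : m - ℓ J < m - s := by omega
      exact_mod_cast hlt
  refine ⟨fun H => main d d' hd hd' H, fun H1 => ?_⟩
  apply main d 1 hd one_pos
  intro K hK1 hK2
  rw [H1 K hK1 hK2, Nat.gcd_one_right]
end

section
/- (Corollary 2.4) Let S be an m×n integer matrix with no zero column, with lcm period ρ₀, and let d, d' be positive divisors of ρ₀ with gcd(d, d') = 1. Suppose that for some positive integer s, for every nonempty J ⊆ [n] with |J| ≤ s one has gcd(e(J), d) = 1 or gcd(e(J), d') = 1. Then the polynomial P_1(t) + P_{dd'}(t) − P_d(t) − P_{d'}(t) has degree strictly less than m − s. -/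
lemma detDivisor_dvd {m n : ℕ} (S : Matrix (Fin m) (Fin n) ℤ) {t J : Finset (Fin n)}
    (h : t ⊆ J) (k : ℕ) : detDivisor S J k ∣ detDivisor S t k := by
  apply Finset.dvd_gcd
  intro p _
  exact Finset.gcd_dvd (Finset.mem_univ (⟨p.1, fun a => ⟨(p.2 a).1, h (p.2 a).2⟩⟩ :
    (Fin k → Fin m) × (Fin k → {j : Fin n // j ∈ J})))

open Submodule in
lemma dep_helper {n : ℕ} {R V : Type*} [CommRing R] [Nontrivial R] [AddCommGroup V] [Module R V]
    (v : Fin n → V)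
    {t : Finset (Fin n)} {j : Fin n} (hj : j ∉ t)
    (ht : LinearIndependent R (fun x : ↥t => v ↑x))
    (hnot : ¬ LinearIndependent R (fun x : ↥(insert j t) => v ↑x)) :
    ∃ c : R, c ≠ 0 ∧ c • v j ∈ Submodule.span R (v '' ↑t) := by
  rw [Fintype.not_linearIndependent_iff] at hnot
  obtain ⟨g, hsum, i₀, hi₀⟩ := hnot
  classical
  set g' : Fin n → R := fun i => if h : i ∈ insert j t then g ⟨i, h⟩ else 0 with hg'
  have hg'eq : ∀ x : ↥(insert j t), g' ↑x = g x := fun ⟨x, hx⟩ => dif_pos hx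
  have hsum' : ∑ i ∈ insert j t, g' i • v i = 0 := by
    rw [← Finset.sum_coe_sort (insert j t) (fun i => g' i • v i)]
    simpa only [hg'eq] using hsum
  rw [Finset.sum_insert hj] at hsum'
  have hmem : ∑ i ∈ t, g' i • v i ∈ span R (v '' (↑t : Set (Fin n))) := by
    refine Submodule.sum_smul_mem _ g' (fun i hi => Submodule.subset_span ?_)
    exact ⟨i, Finset.mem_coe.mpr hi, rfl⟩
  refine ⟨g' j, ?_, ?_⟩
  · intro h0
    rw [h0, zero_smul, zero_add] at hsum'
    have hz : ∑ i : ↥t, g' ↑i • v ↑i = 0 := by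
      rw [Finset.sum_coe_sort t (fun i => g' i • v i)]; exact hsum'
    have hall := Fintype.linearIndependent_iff.mp ht (fun i => g' ↑i) hz
    have hx : g' (↑i₀ : Fin n) ≠ 0 := by rw [hg'eq i₀]; exact hi₀
    rcases Finset.mem_insert.mp i₀.2 with h | h
    · exact hx (by rw [h]; exact h0)
    · exact hx (hall ⟨↑i₀, h⟩)
  · have heq : g' j • v j = - ∑ i ∈ t, g' i • v i := eq_neg_of_add_eq_zero_left hsum'
    rw [heq]; exact neg_mem hmem

open Submodule in
lemma span_finrank_eq {R V : Type*} [CommRing R] [IsDomain R] [AddCommGroup V] [Module R V]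
    {s s' : Set V} (hfin : s'.Finite) (hsub : s ⊆ s')
    (hdep : ∀ z ∈ s', ∃ c : R, c ≠ 0 ∧ c • z ∈ span R s) :
    Module.finrank R (span R s') = Module.finrank R (span R s) := by
  set N := span R s with hN
  set M' := span R s' with hM'
  have hNM : N ≤ M' := span_mono hsub
  have hfinM : Module.Finite R M' := Module.Finite.span_of_finite R hfin
  set N' : Submodule R M' := N.comap M'.subtype with hN'
  -- every element of M' has a nonzero multiple in N
  have h1 : ∀ z ∈ M', ∃ c : R, c ≠ 0 ∧ c • z ∈ N := by
    intro z hz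
    induction hz using Submodule.span_induction with
    | mem x hx => exact hdep x hx
    | zero => exact ⟨1, one_ne_zero, by simp⟩
    | add x y hx hy ihx ihy =>
        obtain ⟨c, hc, hcx⟩ := ihx
        obtain ⟨c', hc', hcy⟩ := ihy
        refine ⟨c * c', mul_ne_zero hc hc', ?_⟩
        rw [smul_add]
        exact N.add_mem (by rw [mul_comm, mul_smul]; exact N.smul_mem _ hcx)
          (by rw [mul_smul]; exact N.smul_mem _ hcy)
    | smul a x hx ihx =>
        obtain ⟨c, hc, hcx⟩ := ihx
        exact ⟨c, hc, by rw [smul_comm]; exact N.smul_mem _ hcx⟩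
  have htor : Module.IsTorsion R (M' ⧸ N') := by
    intro x
    obtain ⟨⟨z, hz⟩, rfl⟩ := Submodule.mkQ_surjective N' x
    obtain ⟨c, hc, hcz⟩ := h1 z hz
    refine ⟨⟨c, mem_nonZeroDivisors_of_ne_zero hc⟩, ?_⟩
    rw [Submonoid.smul_def, ← map_smul, Submodule.mkQ_apply, Submodule.Quotient.mk_eq_zero]
    exact hcz
  have hr0 : Module.finrank R (M' ⧸ N') = 0 := by
    have h := rank_eq_zero_iff_isTorsion.mpr htor
    simp [Module.finrank, h]
  have hq := Submodule.finrank_quotient_add_finrank N'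
  have he : Module.finrank R N' = Module.finrank R N :=
    (Submodule.comapSubtypeEquivOfLe hNM).finrank_eq
  omega

open Submodule in
lemma exists_basis_subset {m n : ℕ}
    (col : Fin n → (Fin m → ℤ)) (J : Finset (Fin n)) :
    ∃ t : Finset (Fin n), t ⊆ J ∧
      Module.finrank ℤ (span ℤ (col '' (↑J : Set (Fin n)))) = t.card ∧
      Module.finrank ℤ (span ℤ (col '' (↑t : Set (Fin n)))) = t.card := by
  classical
  have hne : (J.powerset.filter
      (fun u => LinearIndependent ℤ (fun x : {x // x ∈ u} => col ↑x))).Nonempty := by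
    refine ⟨∅, Finset.mem_filter.mpr ⟨Finset.mem_powerset.mpr (Finset.empty_subset J), ?_⟩⟩
    haveI : IsEmpty {x : Fin n // x ∈ (∅ : Finset (Fin n))} :=
      ⟨fun ⟨x, hx⟩ => by simp at hx⟩
    exact linearIndependent_empty_type
  obtain ⟨t, htmem, htmax⟩ := Finset.exists_max_image _ Finset.card hne
  rw [Finset.mem_filter, Finset.mem_powerset] at htmem
  obtain ⟨htJ, hli⟩ := htmem
  have hrange : Set.range (fun x : ↥t => col ↑x) = col '' (↑t : Set (Fin n)) := by
    ext y
    simp only [Set.mem_range, Set.mem_image, Finset.mem_coe, Subtype.exists, exists_prop]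
  have hcard : Module.finrank ℤ (span ℤ (col '' (↑t : Set (Fin n)))) = t.card := by
    rw [← hrange, finrank_span_eq_card hli, Fintype.card_coe]
  refine ⟨t, htJ, ?_, hcard⟩
  rw [← hcard]
  apply span_finrank_eq (J.finite_toSet.image col) (Set.image_mono (f := col) (by exact_mod_cast htJ))
  rintro z ⟨j, hj, rfl⟩
  rw [Finset.mem_coe] at hj
  by_cases hjt : j ∈ t
  · exact ⟨1, one_ne_zero, by rw [one_smul]; exact subset_span ⟨j, Finset.mem_coe.mpr hjt, rfl⟩⟩
  · by_cases hins : LinearIndependent ℤ (fun x : ↥(insert j t) => col ↑x)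
    · exfalso
      have hmem' : insert j t ∈ J.powerset.filter
          (fun u => LinearIndependent ℤ (fun x : {x // x ∈ u} => col ↑x)) :=
        Finset.mem_filter.mpr ⟨Finset.mem_powerset.mpr (Finset.insert_subset hj htJ), hins⟩
      have := htmax _ hmem'
      rw [Finset.card_insert_of_notMem hjt] at this
      omega
    · exact dep_helper col hjt hli hins

/-- Corollary 2.4: if `d, d'` are coprime positive divisors of the lcm period `ρ₀` and,
for some positive integer `s`, `gcd(e(J), d) = 1` or `gcd(e(J), d') = 1` for every
nonempty `J` with `|J| ≤ s`, then `deg (P_1 + P_{dd'} − P_d − P_{d'}) < m − s`. -/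
theorem stmt_3 (m n : ℕ) (hm : 0 < m) (hn : 0 < n)
    (S : Matrix (Fin m) (Fin n) ℤ) (hS : ∀ j, ∃ i, S i j ≠ 0)
    (ℓ : Finset (Fin n) → ℕ)
    (hℓ : ∀ J, ℓ J = (Matrix.of fun i (j : {j : Fin n // j ∈ J}) => S i j.1).rank)
    (e : Finset (Fin n) → ℕ → ℕ)
    (hpos : ∀ J, ∀ j ∈ Finset.Icc 1 (ℓ J), 0 < e J j)
    (hchain : ∀ J, ∀ j, 1 ≤ j → j + 1 ≤ ℓ J → e J j ∣ e J (j + 1))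
    (hsnf : ∀ J, ∀ k ≤ ℓ J, ∏ j ∈ Finset.Icc 1 k, e J j = detDivisor S J k)
    (ρ : ℕ)
    (hρ : ρ = Finset.lcm ((Finset.univ : Finset (Fin n)).powerset.filter (· ≠ ∅))
      (fun J => e J (ℓ J)))
    (d d' : ℕ) (hd : 0 < d) (hd' : 0 < d') (hdρ : d ∣ ρ) (hd'ρ : d' ∣ ρ)
    (hco : Nat.gcd d d' = 1)
    (s : ℕ) (hs : 0 < s)
    (hcond : ∀ J : Finset (Fin n), J.Nonempty → J.card ≤ s →
      Nat.gcd (e J (ℓ J)) d = 1 ∨ Nat.gcd (e J (ℓ J)) d' = 1) :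
    (Ppoly m n ℓ e 1 + Ppoly m n ℓ e (d * d') - Ppoly m n ℓ e d -
        Ppoly m n ℓ e d').degree < ((m - s : ℕ) : WithBot ℕ) := by
  classical
  classical
  set col : Fin n → (Fin m → ℤ) := fun j i => S i j with hcol
  -- rank as finrank of span of columns
  have hℓ' : ∀ J : Finset (Fin n),
      ℓ J = Module.finrank ℤ (Submodule.span ℤ (col '' (↑J : Set (Fin n)))) := by
    intro J
    rw [hℓ J, Matrix.rank_eq_finrank_span_cols]
    have hset : Set.range (Matrix.transpose (Matrix.of fun i (j : {j : Fin n // j ∈ J}) => S i j.1)) =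
        col '' (↑J : Set (Fin n)) := by
      ext y
      simp only [Set.mem_range, Set.mem_image, Finset.mem_coe]
      constructor
      · rintro ⟨⟨j, hj⟩, rfl⟩; exact ⟨j, hj, rfl⟩
      · rintro ⟨j, hj, rfl⟩; exact ⟨⟨j, hj⟩, rfl⟩
    rw [← hset]; rfl
  have hℓm : ∀ J, ℓ J ≤ m := by
    intro J
    rw [hℓ J]
    exact le_trans (Matrix.rank_le_card_height _) (by simp)
  -- chain of divisibility among elementary divisors
  have echain : ∀ J : Finset (Fin n), ∀ a b, 1 ≤ a → a ≤ b → b ≤ ℓ J → e J a ∣ e J b := by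
    intro J a b ha hab
    induction b, hab using Nat.le_induction with
    | base => intro _; exact dvd_rfl
    | succ b hab ih =>
        intro hb
        exact (ih (by omega)).trans (hchain J b (by omega) hb)
  -- transfer of coprimality from a full-rank subset
  have transfer : ∀ t J : Finset (Fin n), t ⊆ J → 1 ≤ ℓ J → ℓ t = ℓ J → ∀ D : ℕ,
      Nat.gcd (e t (ℓ t)) D = 1 → Nat.gcd (e J (ℓ J)) D = 1 := by
    intro t J htsub h1 hrk D hD
    by_contra hne
    obtain ⟨p, pp, hpg⟩ := Nat.exists_prime_and_dvd hne
    have hpe : p ∣ e J (ℓ J) := hpg.trans (Nat.gcd_dvd_left _ _)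
    have hpD : p ∣ D := hpg.trans (Nat.gcd_dvd_right _ _)
    have hmm : ℓ J ∈ Finset.Icc 1 (ℓ J) := Finset.mem_Icc.mpr ⟨h1, le_rfl⟩
    have hp1 : p ∣ detDivisor S J (ℓ J) := by
      rw [← hsnf J (ℓ J) le_rfl]
      exact hpe.trans (Finset.dvd_prod_of_mem _ hmm)
    have hp2 : p ∣ detDivisor S t (ℓ J) := hp1.trans (detDivisor_dvd S htsub _)
    rw [← hrk, ← hsnf t (ℓ t) le_rfl] at hp2
    obtain ⟨j₀, hj₀, hpj⟩ := pp.prime.exists_mem_finset_dvd hp2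
    have hped : p ∣ e t (ℓ t) :=
      hpj.trans (echain t j₀ (ℓ t) (Finset.mem_Icc.mp hj₀).1 (Finset.mem_Icc.mp hj₀).2 le_rfl)
    have : p ∣ 1 := hD ▸ Nat.dvd_gcd hped hpD
    exact pp.ne_one (Nat.dvd_one.mp this)
  -- key coprimality statement for all J of small rank
  have hkey : ∀ J : Finset (Fin n), 1 ≤ ℓ J → ℓ J ≤ s →
      Nat.gcd (e J (ℓ J)) d = 1 ∨ Nat.gcd (e J (ℓ J)) d' = 1 := by
    intro J h1 hls
    obtain ⟨t, htJ, hJr, htr⟩ := exists_basis_subset col J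
    have hJcard : ℓ J = t.card := by rw [hℓ' J]; exact hJr
    have htcard : ℓ t = t.card := by rw [hℓ' t]; exact htr
    have tne : t.Nonempty := Finset.card_pos.mp (by omega)
    rcases hcond t tne (by omega) with h | h
    · exact Or.inl (transfer t J htJ h1 (by omega) d h)
    · exact Or.inr (transfer t J htJ h1 (by omega) d' h)
  -- vanishing of the combined coefficient in low-rank degrees
  have coeffzero : ∀ J : Finset (Fin n), ℓ J ≤ s →
      (∏ j ∈ Finset.Icc 1 (ℓ J), (Nat.gcd (e J j) 1 : ℤ)) +
        (∏ j ∈ Finset.Icc 1 (ℓ J), (Nat.gcd (e J j) (d * d') : ℤ)) -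
        (∏ j ∈ Finset.Icc 1 (ℓ J), (Nat.gcd (e J j) d : ℤ)) -
        (∏ j ∈ Finset.Icc 1 (ℓ J), (Nat.gcd (e J j) d' : ℤ)) = 0 := by
    intro J hls
    have hp1 : (∏ j ∈ Finset.Icc 1 (ℓ J), (Nat.gcd (e J j) 1 : ℤ)) = 1 :=
      Finset.prod_eq_one fun j _ => by simp [Nat.gcd_one_right]
    rcases Nat.eq_zero_or_pos (ℓ J) with h0 | h1
    · simp [h0]
    rcases hkey J h1 hls with hg | hg
    · have hall : ∀ j ∈ Finset.Icc 1 (ℓ J), Nat.gcd (e J j) d = 1 := by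
        intro j hj
        have hd1 : Nat.gcd (e J j) d ∣ Nat.gcd (e J (ℓ J)) d :=
          Nat.dvd_gcd ((Nat.gcd_dvd_left _ _).trans
            (echain J j (ℓ J) (Finset.mem_Icc.mp hj).1 (Finset.mem_Icc.mp hj).2 le_rfl))
            (Nat.gcd_dvd_right _ _)
        exact Nat.dvd_one.mp (hg ▸ hd1)
      have hp3 : (∏ j ∈ Finset.Icc 1 (ℓ J), (Nat.gcd (e J j) d : ℤ)) = 1 :=
        Finset.prod_eq_one fun j hj => by rw [hall j hj]; norm_num
      have hp24 : (∏ j ∈ Finset.Icc 1 (ℓ J), (Nat.gcd (e J j) (d * d') : ℤ)) =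
          ∏ j ∈ Finset.Icc 1 (ℓ J), (Nat.gcd (e J j) d' : ℤ) := by
        refine Finset.prod_congr rfl fun j hj => ?_
        have h2 : Nat.gcd (e J j) (d * d') = Nat.gcd (e J j) d' :=
          (Nat.coprime_comm.mp (hall j hj)).gcd_mul_left_cancel_right d'
        exact_mod_cast congrArg (Nat.cast : ℕ → ℤ) h2
      rw [hp1, hp3, hp24]; ring
    · have hall : ∀ j ∈ Finset.Icc 1 (ℓ J), Nat.gcd (e J j) d' = 1 := by
        intro j hj
        have hd1 : Nat.gcd (e J j) d' ∣ Nat.gcd (e J (ℓ J)) d' :=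
          Nat.dvd_gcd ((Nat.gcd_dvd_left _ _).trans
            (echain J j (ℓ J) (Finset.mem_Icc.mp hj).1 (Finset.mem_Icc.mp hj).2 le_rfl))
            (Nat.gcd_dvd_right _ _)
        exact Nat.dvd_one.mp (hg ▸ hd1)
      have hp4 : (∏ j ∈ Finset.Icc 1 (ℓ J), (Nat.gcd (e J j) d' : ℤ)) = 1 :=
        Finset.prod_eq_one fun j hj => by rw [hall j hj]; norm_num
      have hp23 : (∏ j ∈ Finset.Icc 1 (ℓ J), (Nat.gcd (e J j) (d * d') : ℤ)) =
          ∏ j ∈ Finset.Icc 1 (ℓ J), (Nat.gcd (e J j) d : ℤ) := by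
        refine Finset.prod_congr rfl fun j hj => ?_
        have h2 : Nat.gcd (e J j) (d * d') = Nat.gcd (e J j) d := by
          rw [mul_comm]
          exact (Nat.coprime_comm.mp (hall j hj)).gcd_mul_left_cancel_right d
        exact_mod_cast congrArg (Nat.cast : ℕ → ℤ) h2
      rw [hp1, hp4, hp23]; ring
  -- now the degree computation
  simp only [Ppoly]
  rw [← Finset.sum_add_distrib, ← Finset.sum_sub_distrib, ← Finset.sum_sub_distrib]
  refine lt_of_le_of_lt (Polynomial.degree_sum_le _ _) ?_
  rw [Finset.sup_lt_iff (by exact WithBot.bot_lt_coe _)]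
  intro J _
  rw [show ∀ a1 a2 a3 a4 : ℤ, ∀ k : ℕ,
      Polynomial.C a1 * Polynomial.X ^ k + Polynomial.C a2 * Polynomial.X ^ k -
        Polynomial.C a3 * Polynomial.X ^ k - Polynomial.C a4 * Polynomial.X ^ k =
        Polynomial.C (a1 + a2 - a3 - a4) * Polynomial.X ^ k from
    fun a1 a2 a3 a4 k => by rw [← add_mul, ← sub_mul, ← sub_mul, ← map_add, ← map_sub, ← map_sub]]
  rcases le_or_gt (ℓ J) s with hls | hls
  · have hz : ((-1 : ℤ)) ^ J.card * (∏ j ∈ Finset.Icc 1 (ℓ J), (Nat.gcd (e J j) 1 : ℤ)) +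
        (-1 : ℤ) ^ J.card * (∏ j ∈ Finset.Icc 1 (ℓ J), (Nat.gcd (e J j) (d * d') : ℤ)) -
        (-1 : ℤ) ^ J.card * (∏ j ∈ Finset.Icc 1 (ℓ J), (Nat.gcd (e J j) d : ℤ)) -
        (-1 : ℤ) ^ J.card * (∏ j ∈ Finset.Icc 1 (ℓ J), (Nat.gcd (e J j) d' : ℤ)) = 0 := by
      have := coeffzero J hls
      linear_combination ((-1 : ℤ) ^ J.card) * this
    rw [hz]
    simp only [map_zero, zero_mul, Polynomial.degree_zero]
    exact WithBot.bot_lt_coe _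
  · refine lt_of_le_of_lt (Polynomial.degree_C_mul_X_pow_le _ _) ?_
    exact_mod_cast Nat.sub_lt_sub_left (lt_of_lt_of_le hls (hℓm J)) hls
end

section
/- (Corollary 2.5) Let S be an m×n integer matrix with no zero column, with lcm period ρ₀, and let d, d' be positive divisors of ρ₀ with gcd(d, d') = 1. If e(J) is a prime power or equal to 1 for every nonempty J ⊆ [n], then P_{dd'}(t) = P_d(t) + P_{d'}(t) − P_1(t). -/
/-- Corollary 2.5: if `d, d'` are coprime positive divisors of the lcm period `ρ₀` and
`e(J)` is a prime power or `1` for every nonempty `J`, then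
`P_{dd'} = P_d + P_{d'} − P_1`. -/
theorem stmt_4 (m n : ℕ) (hm : 0 < m) (hn : 0 < n)
    (S : Matrix (Fin m) (Fin n) ℤ) (hS : ∀ j, ∃ i, S i j ≠ 0)
    (ℓ : Finset (Fin n) → ℕ)
    (hℓ : ∀ J, ℓ J = (Matrix.of fun i (j : {j : Fin n // j ∈ J}) => S i j.1).rank)
    (e : Finset (Fin n) → ℕ → ℕ)
    (hpos : ∀ J, ∀ j ∈ Finset.Icc 1 (ℓ J), 0 < e J j)
    (hchain : ∀ J, ∀ j, 1 ≤ j → j + 1 ≤ ℓ J → e J j ∣ e J (j + 1))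
    (hsnf : ∀ J, ∀ k ≤ ℓ J, ∏ j ∈ Finset.Icc 1 k, e J j = detDivisor S J k)
    (ρ : ℕ)
    (hρ : ρ = Finset.lcm ((Finset.univ : Finset (Fin n)).powerset.filter (· ≠ ∅))
      (fun J => e J (ℓ J)))
    (d d' : ℕ) (hd : 0 < d) (hd' : 0 < d') (hdρ : d ∣ ρ) (hd'ρ : d' ∣ ρ)
    (hco : Nat.gcd d d' = 1)
    (hpp : ∀ J : Finset (Fin n), J.Nonempty →
      IsPrimePow (e J (ℓ J)) ∨ e J (ℓ J) = 1) :
    Ppoly m n ℓ e (d * d') =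
      Ppoly m n ℓ e d + Ppoly m n ℓ e d' - Ppoly m n ℓ e 1 := by
  classical
  -- divisibility of each elementary divisor into the last one
  have hdvd : ∀ J, ∀ j ∈ Finset.Icc 1 (ℓ J), e J j ∣ e J (ℓ J) := by
    intro J j hj
    rw [Finset.mem_Icc] at hj
    obtain ⟨h1, h2⟩ := hj
    have key : ∀ k, j ≤ k → k ≤ ℓ J → e J j ∣ e J k := by
      intro k hk
      induction k, hk using Nat.le_induction with
      | base => intro _; exact dvd_rfl
      | succ k hk ih =>
        intro hk1
        exact (ih (by omega)).trans (hchain J k (h1.trans hk) hk1)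
    exact key (ℓ J) h2 le_rfl
  -- the empty set has rank 0
  have hℓ0 : ℓ (∅ : Finset (Fin n)) = 0 := by
    rw [hℓ]
    have h := Matrix.rank_le_card_width
      (Matrix.of fun i (j : {j : Fin n // j ∈ (∅ : Finset (Fin n))}) => S i j.1)
    simpa using h
  -- key arithmetic identity per J
  have hkey : ∀ J ∈ (Finset.univ : Finset (Fin n)).powerset,
      (∏ j ∈ Finset.Icc 1 (ℓ J), (Nat.gcd (e J j) (d * d') : ℤ)) =
      (∏ j ∈ Finset.Icc 1 (ℓ J), (Nat.gcd (e J j) d : ℤ)) +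
      (∏ j ∈ Finset.Icc 1 (ℓ J), (Nat.gcd (e J j) d' : ℤ)) -
      (∏ j ∈ Finset.Icc 1 (ℓ J), (Nat.gcd (e J j) 1 : ℤ)) := by
    intro J _
    rcases Finset.eq_empty_or_nonempty J with rfl | hJne
    · simp [hℓ0]
    · have h1 : (∏ j ∈ Finset.Icc 1 (ℓ J), (Nat.gcd (e J j) 1 : ℤ)) = 1 := by
        simp [Nat.gcd_one_right]
      rcases hpp J hJne with hppJ | hE1
      · obtain ⟨p, k, hp, hk, hE⟩ := hppJ
        have hpprime : p.Prime := hp.nat_prime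
        have hnot : ¬ p ∣ d ∨ ¬ p ∣ d' := by
          by_contra h
          push_neg at h
          have : p ∣ Nat.gcd d d' := Nat.dvd_gcd h.1 h.2
          rw [hco] at this
          exact Nat.Prime.one_lt hpprime |>.ne' (Nat.eq_one_of_dvd_one this ▸ rfl)
        rcases hnot with hpd | hpd'
        · -- p ∤ d : gcd(e j, d) = 1, gcd(e j, d*d') = gcd(e j, d')
          have hcop : ∀ j ∈ Finset.Icc 1 (ℓ J), Nat.Coprime (e J j) d := by
            intro j hj
            have : e J j ∣ p ^ k := hE ▸ hdvd J j hj
            exact Nat.Coprime.coprime_dvd_left this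
              (Nat.Coprime.pow_left k ((Nat.Prime.coprime_iff_not_dvd hpprime).mpr hpd))
          have hd1 : (∏ j ∈ Finset.Icc 1 (ℓ J), (Nat.gcd (e J j) d : ℤ)) = 1 := by
            rw [Finset.prod_eq_one]
            intro j hj
            exact_mod_cast congrArg (Nat.cast : ℕ → ℤ) (hcop j hj)
          have hmul : (∏ j ∈ Finset.Icc 1 (ℓ J), (Nat.gcd (e J j) (d * d') : ℤ)) =
              (∏ j ∈ Finset.Icc 1 (ℓ J), (Nat.gcd (e J j) d' : ℤ)) := by
            apply Finset.prod_congr rfl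
            intro j hj
            have := Nat.Coprime.gcd_mul_left_cancel_right d' ((hcop j hj).symm)
            exact_mod_cast congrArg (Nat.cast : ℕ → ℤ) this
          rw [hmul, hd1, h1]; ring
        · -- p ∤ d'
          have hcop : ∀ j ∈ Finset.Icc 1 (ℓ J), Nat.Coprime (e J j) d' := by
            intro j hj
            have : e J j ∣ p ^ k := hE ▸ hdvd J j hj
            exact Nat.Coprime.coprime_dvd_left this
              (Nat.Coprime.pow_left k ((Nat.Prime.coprime_iff_not_dvd hpprime).mpr hpd'))
          have hd1 : (∏ j ∈ Finset.Icc 1 (ℓ J), (Nat.gcd (e J j) d' : ℤ)) = 1 := by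
            rw [Finset.prod_eq_one]
            intro j hj
            exact_mod_cast congrArg (Nat.cast : ℕ → ℤ) (hcop j hj)
          have hmul : (∏ j ∈ Finset.Icc 1 (ℓ J), (Nat.gcd (e J j) (d * d') : ℤ)) =
              (∏ j ∈ Finset.Icc 1 (ℓ J), (Nat.gcd (e J j) d : ℤ)) := by
            apply Finset.prod_congr rfl
            intro j hj
            have := Nat.Coprime.gcd_mul_right_cancel_right d ((hcop j hj).symm)
            exact_mod_cast congrArg (Nat.cast : ℕ → ℤ) this
          rw [hmul, hd1, h1]; ring
      · -- e J (ℓ J) = 1, so all e J j = 1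
        have he1 : ∀ j ∈ Finset.Icc 1 (ℓ J), e J j = 1 := by
          intro j hj
          exact Nat.eq_one_of_dvd_one (hE1 ▸ hdvd J j hj)
        have hall : ∀ x : ℕ, (∏ j ∈ Finset.Icc 1 (ℓ J), (Nat.gcd (e J j) x : ℤ)) = 1 := by
          intro x
          rw [Finset.prod_eq_one]
          intro j hj
          simp [he1 j hj]
        rw [hall, hall, hall, hall]; ring
  -- assemble the polynomial identity
  unfold Ppoly
  rw [← Finset.sum_add_distrib, ← Finset.sum_sub_distrib]
  apply Finset.sum_congr rfl
  intro J hJ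
  rw [hkey J hJ]
  simp only [mul_sub, mul_add, map_add, map_sub, add_mul, sub_mul]
end

section
/- (Proposition 2.6) Fix integers ρ₀ ≥ 1 and k ≥ 0. For each d with 1 ≤ d ≤ ρ₀, the formal power series (1 − t^{ρ₀})^{k+1} · Σ_{s=0}^{∞} (d + ρ₀ s)^k t^{d + ρ₀ s} is a polynomial q_{d,k}(t), and for every j with 0 ≤ j ≤ k, the j-th derivative values at t = 1 satisfy q_{1,k}^{(j)}(1) = q_{2,k}^{(j)}(1) = ⋯ = q_{ρ₀,k}^{(j)}(1), and this common value is nonzero. -/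
open Polynomial

noncomputable def qp (ρ d : ℕ) : ℕ → Polynomial ℚ
  | 0 => X ^ d
  | k + 1 => (1 - X ^ ρ) * (X * derivative (qp ρ d k))
      + C ((k : ℚ) + 1) * (C (ρ : ℚ) * X ^ ρ) * qp ρ d k

lemma coeff_X_mul_der (p : Polynomial ℚ) (M : ℕ) :
    (X * derivative p).coeff M = (M : ℚ) * p.coeff M := by
  cases M with
  | zero => simp
  | succ n => rw [coeff_X_mul, coeff_derivative]; push_cast; ring

lemma coeff_qp_succ (ρ d k M : ℕ) :
    (qp ρ d (k+1)).coeff M = (M : ℚ) * (qp ρ d k).coeff M +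
      (if ρ ≤ M then (((k:ℚ)+2)*ρ - M) * (qp ρ d k).coeff (M - ρ) else 0) := by
  have h2 : ∀ p : Polynomial ℚ, (X ^ ρ * p).coeff M =
      if ρ ≤ M then p.coeff (M - ρ) else 0 := by
    intro p; rw [mul_comm, coeff_mul_X_pow']
  have e : qp ρ d (k+1) = X * derivative (qp ρ d k) - X ^ ρ * (X * derivative (qp ρ d k))
      + X ^ ρ * (C (((k:ℚ)+1) * ρ) * qp ρ d k) := by
    show (1 - X ^ ρ) * (X * derivative (qp ρ d k))
      + C ((k : ℚ) + 1) * (C (ρ : ℚ) * X ^ ρ) * qp ρ d k = _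
    rw [C_mul]; ring
  rw [e, coeff_add, coeff_sub, h2, h2, coeff_X_mul_der, coeff_C_mul, coeff_X_mul_der]
  by_cases h : ρ ≤ M
  · simp only [h, if_true]
    rw [Nat.cast_sub h]
    ring
  · simp [h]

lemma qp_invariants (ρ d : ℕ) (hd1 : 1 ≤ d) (hdρ : d ≤ ρ) (k : ℕ) :
    (∀ M, 0 ≤ (qp ρ d k).coeff M) ∧ (∀ M, d + k*ρ < M → (qp ρ d k).coeff M = 0) ∧
      (qp ρ d k).coeff (d + k*ρ) = ((ρ:ℚ) - d)^k := by
  induction k with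
  | zero =>
    refine ⟨fun M => ?_, fun M hM => ?_, ?_⟩
    · show 0 ≤ (X ^ d : Polynomial ℚ).coeff M
      rw [coeff_X_pow]
      split_ifs <;> norm_num
    · show (X ^ d : Polynomial ℚ).coeff M = 0
      rw [coeff_X_pow, if_neg (by omega)]
    · show (X ^ d : Polynomial ℚ).coeff (d + 0*ρ) = _
      rw [coeff_X_pow, if_pos (by omega), pow_zero]
  | succ k IH =>
    obtain ⟨IH1, IH2, IH3⟩ := IH
    have e1 : (k+1)*ρ = k*ρ + ρ := by ring
    have e2 : (k+2)*ρ = k*ρ + ρ + ρ := by ring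
    refine ⟨fun M => ?_, fun M hM => ?_, ?_⟩
    · rw [coeff_qp_succ]
      have t1 : 0 ≤ (M : ℚ) * (qp ρ d k).coeff M :=
        mul_nonneg (by positivity) (IH1 M)
      refine add_nonneg t1 ?_
      split_ifs with h
      · by_cases hM2 : M ≤ (k+2)*ρ
        · refine mul_nonneg ?_ (IH1 _)
          have : (M:ℚ) ≤ ((k:ℚ)+2)*ρ := by
            have := (Nat.cast_le (α := ℚ)).mpr hM2
            push_cast at this
            linarith
          linarith
        · rw [IH2 (M - ρ) (by omega), mul_zero]
      · exact le_rfl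
    · rw [coeff_qp_succ, IH2 M (by omega)]
      rw [mul_zero, zero_add]
      split_ifs with h
      · rw [IH2 (M - ρ) (by omega), mul_zero]
      · rfl
    · rw [coeff_qp_succ]
      have hle : ρ ≤ d + (k+1)*ρ := by omega
      rw [if_pos hle, IH2 (d + (k+1)*ρ) (by omega)]
      have hsub : d + (k+1)*ρ - ρ = d + k*ρ := by omega
      rw [hsub, IH3, mul_zero, zero_add, pow_succ]
      have : (((k:ℚ)+2)*ρ - (d + (k+1)*ρ : ℕ)) = (ρ:ℚ) - d := by
        push_cast; ring
      rw [this]; ring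

lemma qp_top_dρ (ρ : ℕ) (hρ : 1 ≤ ρ) (k : ℕ) (hk : 1 ≤ k) :
    (qp ρ ρ k).coeff (k*ρ) = (ρ:ℚ)^k := by
  induction k, hk using Nat.le_induction with
  | base =>
    have h := coeff_qp_succ ρ ρ 0 ρ
    rw [one_mul]
    rw [h]
    show (ρ:ℚ) * (X ^ ρ : Polynomial ℚ).coeff ρ + _ = _
    rw [coeff_X_pow, if_pos rfl, if_pos le_rfl, Nat.sub_self]
    show _ + _ * (X ^ ρ : Polynomial ℚ).coeff 0 = _
    rw [coeff_X_pow, if_neg (by omega)]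
    push_cast; ring
  | succ k hk IH =>
    rw [coeff_qp_succ]
    have h3 := (qp_invariants ρ ρ hρ le_rfl k).2.2
    have hM : (k+1)*ρ = ρ + k*ρ := by ring
    rw [hM, h3, sub_self, zero_pow (by omega), mul_zero, zero_add,
      if_pos (by omega : ρ ≤ ρ + k*ρ), Nat.add_sub_cancel_left, IH]
    have : (((k:ℚ)+2)*ρ - (ρ + k*ρ : ℕ)) = (ρ:ℚ) := by push_cast; ring
    rw [this, pow_succ]; ring

lemma eval_iterate_deriv_pos (p : Polynomial ℚ) (hnn : ∀ M, 0 ≤ p.coeff M)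
    (j E : ℕ) (hjE : j ≤ E) (hE : 0 < p.coeff E) :
    0 < (derivative^[j] p).eval 1 := by
  set q := derivative^[j] p with hqdef
  have hq : ∀ m, q.coeff m = (m+j).descFactorial j • p.coeff (m+j) := fun m =>
    coeff_iterate_derivative p m
  have hqnn : ∀ m, 0 ≤ q.coeff m := by
    intro m
    rw [hq, nsmul_eq_mul]
    exact mul_nonneg (by positivity) (hnn _)
  have hEq : 0 < q.coeff (E - j) := by
    rw [hq, Nat.sub_add_cancel hjE, nsmul_eq_mul]
    refine mul_pos ?_ hE
    have : 0 < E.descFactorial j := by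
      rw [Nat.descFactorial_eq_factorial_mul_choose]
      exact Nat.mul_pos j.factorial_pos (Nat.choose_pos hjE)
    exact_mod_cast this
  have heval : q.eval 1 = ∑ m ∈ q.support, q.coeff m := by
    rw [eval_eq_sum, Polynomial.sum]
    simp
  rw [heval]
  refine Finset.sum_pos' (fun i _ => hqnn i) ⟨E - j, ?_, hEq⟩
  exact mem_support_iff.mpr (ne_of_gt hEq)

lemma dvd_deriv (m : ℕ) (p : Polynomial ℚ) (h : (X - 1 : Polynomial ℚ)^(m+1) ∣ p) :
    (X - 1 : Polynomial ℚ)^m ∣ derivative p := by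
  obtain ⟨g, rfl⟩ := h
  rw [derivative_mul, derivative_pow, derivative_sub, derivative_X, derivative_one,
    Nat.add_sub_cancel]
  refine dvd_add ⟨C ((m+1 : ℕ):ℚ) * (1 * g), by ring⟩ ⟨(X - 1) * derivative g, by ring⟩

lemma eval_iterate_deriv_zero (j : ℕ) : ∀ p : Polynomial ℚ, (X - 1 : Polynomial ℚ)^(j+1) ∣ p →
    (derivative^[j] p).eval 1 = 0 := by
  induction j with
  | zero =>
    intro p hp
    rw [pow_one] at hp
    have : (X - C (1:ℚ)) ∣ p := by rwa [C_1]
    simpa using dvd_iff_isRoot.mp this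
  | succ j IH =>
    intro p hp
    rw [Function.iterate_succ_apply]
    exact IH _ (dvd_deriv (j+1) p hp)

lemma qp_diff_dvd (ρ d d' : ℕ) (hρ : 1 ≤ ρ) (k : ℕ) :
    (X - 1 : Polynomial ℚ)^(k+1) ∣ (qp ρ d k - qp ρ d' k) := by
  induction k with
  | zero =>
    rw [pow_one, ← C_1]
    refine dvd_iff_isRoot.mpr ?_
    show ((X^d - X^d' : Polynomial ℚ)).eval 1 = 0
    simp
  | succ k IH =>
    obtain ⟨g, hg⟩ := IH
    set w : Polynomial ℚ := ∑ i ∈ Finset.range ρ, X^i with hwdef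
    have hgeom : (1 : Polynomial ℚ) - X^ρ = -((X - 1) * w) := by
      have h := geom_sum_mul (X : Polynomial ℚ) ρ
      linear_combination h
    have hwone : w.eval 1 = (ρ:ℚ) := by
      rw [hwdef, eval_finset_sum]
      simp
    have hρQ : (ρ:ℚ) ≠ 0 := by positivity
    have hroot : (((X:Polynomial ℚ)^ρ - C ((ρ:ℚ)⁻¹) * (w * X))).IsRoot 1 := by
      rw [IsRoot.def, eval_sub, eval_pow, eval_X, eval_mul, eval_mul, eval_C, hwone, eval_X]
      field_simp
      simp
    obtain ⟨v, hv⟩ := dvd_iff_isRoot.mpr hroot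
    have hXρ : (X:Polynomial ℚ)^ρ = (X - 1)*v + C ((ρ:ℚ)⁻¹)*(w*X) := by
      rw [C_1] at hv
      linear_combination hv
    have hCρ : C ((ρ:ℚ)) * C ((ρ:ℚ)⁻¹) = (1 : Polynomial ℚ) := by
      rw [← C_mul, mul_inv_cancel₀ hρQ, C_1]
    have hD' : derivative (qp ρ d k) - derivative (qp ρ d' k)
        = C ((k:ℚ)+1)*(X-1)^k*g + (X-1)^(k+1)*derivative g := by
      rw [← derivative_sub, hg, derivative_mul, derivative_pow, derivative_sub,
        derivative_X, derivative_one]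
      push_cast
      ring
    refine ⟨C ((k:ℚ)+1) * C (ρ:ℚ) * (v * g) - w * (X * derivative g), ?_⟩
    have key : qp ρ d (k+1) - qp ρ d' (k+1)
        = (1 - X^ρ) * (X * (derivative (qp ρ d k) - derivative (qp ρ d' k)))
          + C ((k:ℚ)+1) * (C (ρ:ℚ) * X^ρ) * (qp ρ d k - qp ρ d' k) := by
      simp only [qp]
      ring
    rw [key, hD', hg, hgeom, hXρ]
    linear_combination (C ((k:ℚ)+1) * ((w*X) * ((X-1)^(k+1) * g))) * hCρ

lemma qp_series (ρ d : ℕ) (hρ : 1 ≤ ρ) (hd1 : 1 ≤ d) (hdρ : d ≤ ρ) (k : ℕ) :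
    ((qp ρ d k : Polynomial ℚ) : PowerSeries ℚ) = (1 - PowerSeries.X ^ ρ) ^ (k + 1) *
      PowerSeries.mk (fun N => if N % ρ = d % ρ ∧ d ≤ N then (N : ℚ) ^ k else 0) := by
  induction k with
  | zero =>
    show ((X ^ d : Polynomial ℚ) : PowerSeries ℚ) = _
    rw [pow_one]
    ext N
    rw [Polynomial.coeff_coe, coeff_X_pow, sub_mul, one_mul, map_sub,
      PowerSeries.coeff_X_pow_mul', PowerSeries.coeff_mk]
    by_cases hNd : N = d
    · subst hNd
      simp only [if_pos rfl, and_self, le_refl, if_pos]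
      have h0 : ¬ (ρ ≤ N) ∨ ρ = N := by omega
      rcases h0 with h0 | h0
      · rw [if_neg h0]; simp
      · subst h0
        rw [if_pos le_rfl, PowerSeries.coeff_mk, Nat.sub_self]
        have : ¬ (0 % ρ = ρ % ρ ∧ ρ ≤ 0) := by omega
        rw [if_neg this]; simp
    · rw [if_neg hNd]
      by_cases hc : N % ρ = d % ρ ∧ d ≤ N
      · have hdN : d < N := lt_of_le_of_ne hc.2 (fun h => hNd h.symm)
        have hdvd : ρ ∣ N - d := (Nat.modEq_iff_dvd' hc.2).mp hc.1.symm
        have hge : d + ρ ≤ N := by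
          have := Nat.le_of_dvd (by omega : 0 < N - d) hdvd
          omega
        have hρN : ρ ≤ N := by omega
        rw [if_pos hc, if_pos hρN, PowerSeries.coeff_mk]
        have hc2 : (N - ρ) % ρ = d % ρ ∧ d ≤ N - ρ := by
          constructor
          · have : N - ρ + ρ = N := Nat.sub_add_cancel hρN
            calc (N - ρ) % ρ = (N - ρ + ρ) % ρ := (Nat.add_mod_right _ _).symm
              _ = d % ρ := by rw [this]; exact hc.1
          · omega
        rw [if_pos hc2]; ring
      · rw [if_neg hc]
        by_cases hρN : ρ ≤ N
        · rw [if_pos hρN, PowerSeries.coeff_mk]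
          have hc2 : ¬ ((N - ρ) % ρ = d % ρ ∧ d ≤ N - ρ) := by
            intro ⟨h1, h2⟩
            apply hc
            have hNs : N - ρ + ρ = N := Nat.sub_add_cancel hρN
            constructor
            · calc N % ρ = (N - ρ + ρ) % ρ := by rw [hNs]
                _ = (N - ρ) % ρ := Nat.add_mod_right _ _
                _ = d % ρ := h1
            · omega
          rw [if_neg hc2]; ring
        · rw [if_neg hρN]; ring
  | succ k IH =>
    set F : PowerSeries ℚ := PowerSeries.mk (fun N => if N % ρ = d % ρ ∧ d ≤ N then (N : ℚ) ^ k else 0) with hF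
    set U : PowerSeries ℚ := 1 - PowerSeries.X ^ ρ with hU
    set A : PowerSeries ℚ := PowerSeries.derivative ℚ F with hA
    have hS : (PowerSeries.mk (fun N => if N % ρ = d % ρ ∧ d ≤ N then (N : ℚ) ^ (k+1) else 0) : PowerSeries ℚ)
        = PowerSeries.X * A := by
      ext N
      cases N with
      | zero =>
        rw [PowerSeries.coeff_mk]
        have : ¬ (0 % ρ = d % ρ ∧ d ≤ 0) := by omega
        rw [if_neg this]
        simp [PowerSeries.coeff_zero_eq_constantCoeff]
      | succ n =>
        rw [PowerSeries.coeff_succ_X_mul, PowerSeries.coeff_mk, hA, PowerSeries.coeff_derivative,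
          PowerSeries.coeff_mk]
        split_ifs with h
        · push_cast; ring
        · ring
    -- coe of U powers
    have hUP : ∀ m : ℕ, (((1 - X ^ ρ : Polynomial ℚ) ^ m : Polynomial ℚ) : PowerSeries ℚ) = U ^ m := by
      intro m
      rw [Polynomial.coe_pow, Polynomial.coe_sub, Polynomial.coe_one, Polynomial.coe_pow,
        Polynomial.coe_X]
    -- derivative identity, polynomial level
    have hXpow : (X : Polynomial ℚ) * X ^ (ρ - 1) = X ^ ρ := by
      rw [← pow_succ']
      congr 1
      omega
    have hpoly : (1 - X ^ ρ : Polynomial ℚ) * (X * derivative ((1 - X ^ ρ : Polynomial ℚ) ^ (k+1)))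
        = -(C ((k : ℚ) + 1) * (C (ρ:ℚ) * X ^ ρ) * (1 - X ^ ρ) ^ (k+1)) := by
      rw [derivative_pow]
      rw [derivative_sub, derivative_one, derivative_X_pow]
      push_cast
      rw [← hXpow]
      ring
    -- apply derivative to IH
    have hD := congrArg (fun s => PowerSeries.derivative ℚ s) IH
    simp only [PowerSeries.derivative_coe] at hD
    rw [← hUP (k+1), Derivation.leibniz, PowerSeries.derivative_coe, smul_eq_mul, smul_eq_mul,
      ← hA] at hD
    -- hD : ↑(derivative (qp ρ d k)) = ↑((1-X^ρ)^(k+1)) * A + F * ↑(derivative ((1-X^ρ)^(k+1)))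
    have hpolyC := congrArg (fun p : Polynomial ℚ => (p : PowerSeries ℚ)) hpoly
    simp only [Polynomial.coe_mul, Polynomial.coe_neg, Polynomial.coe_sub, Polynomial.coe_one,
      Polynomial.coe_pow, Polynomial.coe_X, Polynomial.coe_C] at hpolyC hD ⊢
    rw [hS]
    show ((qp ρ d (k+1) : Polynomial ℚ) : PowerSeries ℚ) = U ^ (k+1+1) * (PowerSeries.X * A)
    simp only [qp, Polynomial.coe_add, Polynomial.coe_mul, Polynomial.coe_sub, Polynomial.coe_one,
      Polynomial.coe_pow, Polynomial.coe_X, Polynomial.coe_C]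
    rw [← hU] at hpolyC hD ⊢
    linear_combination (U * PowerSeries.X) * hD
      + ((PowerSeries.C ((k:ℚ)+1)) * (PowerSeries.C (ρ:ℚ) * PowerSeries.X ^ ρ)) * IH
      + F * hpolyC



/-- Proposition 2.6: for `1 ≤ d ≤ ρ₀` the power series
`(1 − t^{ρ₀})^{k+1} Σ_{s≥0} (d + ρ₀ s)^k t^{d + ρ₀ s}` is a polynomial `q_{d,k}(t)`
(the coefficient of `t^N` of the sum is `N^k` if `N ≡ d (mod ρ₀)` and `d ≤ N`, else `0`),
and for every `0 ≤ j ≤ k` the `j`-th derivatives of these polynomials at `t = 1` are all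
equal for `d = 1, …, ρ₀`, and nonzero. -/
theorem stmt_7 (ρ k : ℕ) (hρ : 1 ≤ ρ) :
    (∀ d ∈ Finset.Icc 1 ρ, ∃ p : Polynomial ℚ,
        (p : PowerSeries ℚ) =
          (1 - PowerSeries.X ^ ρ) ^ (k + 1) *
            PowerSeries.mk (fun N => if N % ρ = d % ρ ∧ d ≤ N then (N : ℚ) ^ k else 0)) ∧
    (∀ Q : ℕ → Polynomial ℚ,
      (∀ d ∈ Finset.Icc 1 ρ,
          ((Q d : Polynomial ℚ) : PowerSeries ℚ) =
            (1 - PowerSeries.X ^ ρ) ^ (k + 1) *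
              PowerSeries.mk (fun N => if N % ρ = d % ρ ∧ d ≤ N then (N : ℚ) ^ k else 0)) →
      ∀ j ≤ k, ∀ d ∈ Finset.Icc 1 ρ, ∀ d' ∈ Finset.Icc 1 ρ,
        (Polynomial.derivative^[j] (Q d)).eval 1 =
            (Polynomial.derivative^[j] (Q d')).eval 1 ∧
          (Polynomial.derivative^[j] (Q d)).eval 1 ≠ 0) := by
  constructor
  · intro d hd
    rw [Finset.mem_Icc] at hd
    exact ⟨qp ρ d k, qp_series ρ d hρ hd.1 hd.2 k⟩
  · intro Q hQ j hj d hd d' hd'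
    have hd2 := Finset.mem_Icc.mp hd
    have hd2' := Finset.mem_Icc.mp hd'
    have hQd : Q d = qp ρ d k := by
      apply Polynomial.coe_inj.mp
      rw [hQ d hd, qp_series ρ d hρ hd2.1 hd2.2 k]
    have hQd' : Q d' = qp ρ d' k := by
      apply Polynomial.coe_inj.mp
      rw [hQ d' hd', qp_series ρ d' hρ hd2'.1 hd2'.2 k]
    obtain ⟨H1, H2, H3⟩ := qp_invariants ρ d hd2.1 hd2.2 k
    have hpos : 0 < (Polynomial.derivative^[j] (qp ρ d k)).eval 1 := by
      have hkρ : k ≤ k*ρ := Nat.le_mul_of_pos_right k (by omega)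
      have hex : ∃ E, j ≤ E ∧ 0 < (qp ρ d k).coeff E := by
        rcases eq_or_lt_of_le hd2.2 with heq | hlt
        · rcases Nat.eq_zero_or_pos k with hk0 | hk1
          · refine ⟨d + k*ρ, by omega, ?_⟩
            rw [H3, hk0, pow_zero]
            norm_num
          · refine ⟨k*ρ, by omega, ?_⟩
            rw [heq, qp_top_dρ ρ hρ k hk1]
            positivity
        · refine ⟨d + k*ρ, by omega, ?_⟩
          rw [H3]
          have : (d:ℚ) < (ρ:ℚ) := by exact_mod_cast hlt
          have h2 : (0:ℚ) < (ρ:ℚ) - d := by linarith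
          positivity
      obtain ⟨E, hE1, hE2⟩ := hex
      exact eval_iterate_deriv_pos _ H1 j E hE1 hE2
    constructor
    · have hdvd := qp_diff_dvd ρ d d' hρ k
      have hdvd' : (X - 1 : Polynomial ℚ)^(j+1) ∣ (qp ρ d k - qp ρ d' k) :=
        dvd_trans (pow_dvd_pow _ (by omega)) hdvd
      have h0 := eval_iterate_deriv_zero j _ hdvd'
      rw [Polynomial.iterate_derivative_sub, eval_sub] at h0
      rw [hQd, hQd']
      linarith
    · rw [hQd]
      exact ne_of_gt hpos
end

section
/- (Corollary 3.4) Let R be an irreducible reduced crystallographic root system of rank m in a Euclidean space, let B = {α_1, …, α_m} be a base with associated positive system R_+, let n = |R_+|, let S be the m×n integer matrix whose columns are the coefficient vectors of the positive roots with respect to α_1, …, α_m, and let h be the Coxeter number of R. Then for every positive integer q, χ_S(q) > 0 if and only if q ≥ h. -/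
open scoped RealInnerProductSpace

set_option maxHeartbeats 1600000

/-- A finite subset `R` of a Euclidean space is an irreducible reduced crystallographic
root system. -/
structure IsIrredRootSystem {V : Type*} [NormedAddCommGroup V] [InnerProductSpace ℝ V]
    (R : Finset V) : Prop where
  nonempty : R.Nonempty
  zero_not_mem : (0 : V) ∉ R
  span_eq_top : Submodule.span ℝ (R : Set V) = ⊤
  reduced : ∀ α ∈ R, ∀ c : ℝ, c • α ∈ (R : Set V) → c = 1 ∨ c = -1
  crystallographic : ∀ α ∈ R, ∀ β ∈ R, ∃ z : ℤ, 2 * ⟪β, α⟫ = (z : ℝ) * ⟪α, α⟫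
  reflect_mem : ∀ α ∈ R, ∀ β ∈ R, β - (2 * ⟪β, α⟫ / ⟪α, α⟫) • α ∈ R
  irreducible : ∀ R₁ R₂ : Finset V, (R₁ : Set V) ∪ (R₂ : Set V) = (R : Set V) →
    (∀ a ∈ R₁, ∀ b ∈ R₂, ⟪a, b⟫ = 0) → R₁ = ∅ ∨ R₂ = ∅

private lemma reflect_dist {V : Type*} [NormedAddCommGroup V] [InnerProductSpace ℝ V]
    (v p x : V) (r : ℝ) (hv : ⟪v,v⟫ ≠ 0) :
    ‖(x - (2*(⟪x,v⟫ - r)/⟪v,v⟫) • v) - p‖^2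
      = ‖x - p‖^2 + (4*(⟪x,v⟫-r)/⟪v,v⟫)*(⟪p,v⟫ - r) := by
  have h1 : (x - (2*(⟪x,v⟫ - r)/⟪v,v⟫) • v) - p = (x - p) - (2*(⟪x,v⟫ - r)/⟪v,v⟫) • v := by
    abel
  rw [h1, norm_sub_sq_real, norm_smul, real_inner_smul_right, inner_sub_left]
  have h2 : ‖v‖^2 = ⟪v,v⟫ := (real_inner_self_eq_norm_sq v).symm
  have h3 : (‖(2*(⟪x,v⟫ - r)/⟪v,v⟫ : ℝ)‖ * ‖v‖)^2 = (2*(⟪x,v⟫ - r)/⟪v,v⟫)^2 * ⟪v,v⟫ := by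
    rw [mul_pow, ← h2, Real.norm_eq_abs, sq_abs]
  rw [h3]
  field_simp
  ring

/-- Corollary 3.4: for an irreducible reduced crystallographic root system `R` of rank
`m` with base `α`, positive system `P` enumerated by the columns of the coefficient
matrix `S`, and Coxeter number `h`, one has `χ_S(q) > 0` if and only if `q ≥ h`. -/
theorem stmt_10 {V : Type*} [NormedAddCommGroup V] [InnerProductSpace ℝ V]
    [FiniteDimensional ℝ V]
    (m : ℕ) (hm : 0 < m) (hdim : Module.finrank ℝ V = m)
    (R : Finset V) (hR : IsIrredRootSystem R)
    (α : Fin m → V) (hind : LinearIndependent ℝ α)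
    (P : Finset V) (hPR : P ⊆ R)
    (hPpos : ∀ β ∈ R, β ∈ P ∨ -β ∈ P)
    (hPnn : ∀ β ∈ P, -β ∉ P)
    (hαP : ∀ i, α i ∈ P)
    (n : ℕ) (hn : 2 * n = R.card)
    (S : Matrix (Fin m) (Fin n) ℤ) (hSnn : ∀ i j, 0 ≤ S i j)
    (ρ : Fin n ≃ {β : V // β ∈ P})
    (hScol : ∀ j : Fin n, (ρ j : V) = ∑ i, (S i j : ℝ) • α i)
    (nvec : Fin m → ℕ) (hnvec : ∀ i, 0 < nvec i)
    (hhigh_mem : ∃ j : Fin n, ∀ i, S i j = (nvec i : ℤ))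
    (hhighest : ∀ (j : Fin n) (i : Fin m), S i j ≤ (nvec i : ℤ))
    (h : ℕ) (hh : h = 1 + ∑ i, nvec i) :
    ∀ q : ℕ, 0 < q → (0 < chiCount m n q S ↔ h ≤ q) := by
  intro q hq
  haveI : NeZero q := ⟨hq.ne'⟩
  have hvm : ∀ (z : Fin m → ZMod q) (j : Fin n),
      Matrix.vecMul z (S.map (fun a => (a : ZMod q))) j = ∑ i, z i * (S i j : ZMod q) := by
    intro z j
    simp [Matrix.vecMul, dotProduct, Matrix.map_apply]
  -- each column has a positive sum of entries
  have hcolpos : ∀ j : Fin n, 0 < ∑ i, S i j := by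
    intro j
    rcases lt_or_ge 0 (∑ i, S i j) with hgt | hle
    · exact hgt
    · exfalso
      have h0 : ∑ i, S i j = 0 :=
        le_antisymm hle (Finset.sum_nonneg fun i _ => hSnn i j)
      have hz0 : ∀ i ∈ Finset.univ, S i j = 0 :=
        (Finset.sum_eq_zero_iff_of_nonneg (fun i _ => hSnn i j)).mp h0
      have : (ρ j : V) = 0 := by
        rw [hScol]
        apply Finset.sum_eq_zero
        intro i _
        rw [hz0 i (Finset.mem_univ i)]
        simp
      exact hR.zero_not_mem (this ▸ hPR (ρ j).2)
  have hcolle : ∀ j : Fin n, ∑ i, S i j ≤ ∑ i, (nvec i : ℤ) :=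
    fun j => Finset.sum_le_sum fun i _ => hhighest j i
  constructor
  · -- hard direction : positivity implies h ≤ q
    intro hpos
    -- extract a witness z
    have hne : Nonempty {z : Fin m → ZMod q //
        ∀ j, Matrix.vecMul z (S.map (fun a => (a : ZMod q))) j ≠ 0} := by
      by_contra hem
      rw [not_nonempty_iff] at hem
      rw [chiCount, Nat.card_of_isEmpty] at hpos
      exact lt_irrefl 0 hpos
    obtain ⟨⟨z, hz⟩⟩ := hne
    -- dual vectors
    haveI : Nonempty (Fin m) := ⟨⟨0, hm⟩⟩
    have hcard : Fintype.card (Fin m) = Module.finrank ℝ V := by simp [hdim]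
    obtain ⟨d, hd⟩ : ∃ d : Fin m → V, ∀ i j, ⟪d i, α j⟫ = if j = i then 1 else 0 := by
      let B := basisOfLinearIndependentOfCardEqFinrank hind hcard
      have hB : ∀ i, B i = α i := fun i => by
        simp [B, coe_basisOfLinearIndependentOfCardEqFinrank]
      refine ⟨fun i => (InnerProductSpace.toDual ℝ V).symm
        (LinearMap.toContinuousLinearMap (B.coord i)), fun i j => ?_⟩
      have := InnerProductSpace.toDual_apply_apply (𝕜 := ℝ) (E := V)
        (x := (InnerProductSpace.toDual ℝ V).symm (LinearMap.toContinuousLinearMap (B.coord i)))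
        (y := α j)
      rw [← this, (InnerProductSpace.toDual ℝ V).apply_symm_apply,
        LinearMap.coe_toContinuousLinearMap', ← hB j, Module.Basis.coord_apply, Module.Basis.repr_self]
      simp [Finsupp.single_apply]
    have hXα : ∀ (w : Fin m → ℝ) (j : Fin m), ⟪∑ i, w i • d i, α j⟫ = w j := by
      intro w j
      rw [sum_inner]
      simp only [real_inner_smul_left, hd, mul_ite, mul_one, mul_zero]
      simp [Finset.sum_ite_eq]
    -- values of inner products against positive roots
    have hval : ∀ (x : V) (j : Fin n), ⟪x, (ρ j : V)⟫ = ∑ i, (S i j : ℝ) * ⟪x, α i⟫ := by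
      intro x j
      rw [hScol, inner_sum]
      simp [real_inner_smul_right]
    -- the highest root
    obtain ⟨jθ, hjθ⟩ := hhigh_mem
    set θ : V := (ρ jθ : V) with hθdef
    have hθR : θ ∈ R := hPR (ρ jθ).2
    have hθval : ∀ x : V, ⟪x, θ⟫ = ∑ i, (nvec i : ℝ) * ⟪x, α i⟫ := by
      intro x
      rw [hθdef, hval]
      apply Finset.sum_congr rfl
      intro i _
      rw [hjθ i]
      norm_num
    -- positivity of self inner products
    have hRpos : ∀ β ∈ R, 0 < ⟪β, β⟫ := by
      intro β hβ
      have hβ0 : β ≠ 0 := fun h0 => hR.zero_not_mem (h0 ▸ hβ)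
      rw [real_inner_self_eq_norm_sq]
      exact pow_pos (norm_pos_iff.mpr hβ0) 2
    have hααpos : ∀ i, 0 < ⟪α i, α i⟫ := fun i => hRpos (α i) (hPR (hαP i))
    have hθθpos : 0 < ⟪θ, θ⟫ := hRpos θ hθR
    -- numeric positivity
    have hhpos : 0 < h := by omega
    have hhR : (0:ℝ) < h := by exact_mod_cast hhpos
    have hqR : (0:ℝ) < q := by exact_mod_cast hq
    have hsum : (∑ i, (nvec i : ℝ)) = (h:ℝ) - 1 := by
      have : ((∑ i, nvec i : ℕ) : ℝ) = (h:ℝ) - 1 := by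
        rw [hh]; push_cast; ring
      rw [← this]; push_cast; ring
    -- the reference point p
    set p : V := ∑ i, ((q:ℝ)/(h:ℝ)) • d i with hpdef
    have hpα : ∀ i, ⟪p, α i⟫ = (q:ℝ)/(h:ℝ) := by
      intro i
      rw [hpdef]
      exact hXα (fun _ => (q:ℝ)/(h:ℝ)) i
    have hpθ : ⟪p, θ⟫ = ((h:ℝ) - 1) * ((q:ℝ)/(h:ℝ)) := by
      rw [hθval, ← hsum, Finset.sum_mul]
      apply Finset.sum_congr rfl
      intro i _
      rw [hpα]
    -- the uniform decrease δ
    set C : ℝ := ⟪θ,θ⟫ + ∑ i, ⟪α i, α i⟫ with hCdef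
    have hsumα : (0:ℝ) ≤ ∑ i, ⟪α i, α i⟫ :=
      Finset.sum_nonneg fun i _ => (hααpos i).le
    have hCpos : 0 < C := by
      rw [hCdef]; linarith [hθθpos]
    have hCθ : ⟪θ,θ⟫ ≤ C := by
      rw [hCdef]; linarith
    have hCα : ∀ i, ⟪α i, α i⟫ ≤ C := by
      intro i
      have : ⟪α i, α i⟫ ≤ ∑ j, ⟪α j, α j⟫ :=
        Finset.single_le_sum (f := fun j => ⟪α j, α j⟫) (fun j _ => (hRpos (α j) (hPR (hαP j))).le)
          (Finset.mem_univ i)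
      rw [hCdef]; linarith [hθθpos]
    set δ : ℝ := 4*(q:ℝ)/((h:ℝ)*C) with hδdef
    have hδpos : 0 < δ := by
      rw [hδdef]; positivity
    have hδeq : δ = (4/C)*((q:ℝ)/(h:ℝ)) := by
      rw [hδdef]; field_simp
    have hqh : (0:ℝ) < (q:ℝ)/(h:ℝ) := by positivity
    -- the reflection move preserves the integrality predicate
    have hmove : ∀ v ∈ R, ∀ r : ℝ,
        (∀ β ∈ R, ∃ zr : ℤ, r * (2*⟪β,v⟫/⟪v,v⟫) = (q:ℝ) * zr) →
        ∀ x : V, (∀ β ∈ R, ∃ k : ℤ, ⟪x, β⟫ = (k:ℝ) ∧ ¬ ((q:ℤ) ∣ k)) →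
        (∀ β ∈ R, ∃ k : ℤ, ⟪x - (2*(⟪x,v⟫-r)/⟪v,v⟫) • v, β⟫ = (k:ℝ) ∧ ¬ ((q:ℤ) ∣ k)) := by
      intro v hv r hr x hx β hβ
      have hγ := hR.reflect_mem v hv β hβ
      obtain ⟨k, hk, hdk⟩ := hx _ hγ
      obtain ⟨zr, hzr⟩ := hr β hβ
      have hs : ⟪v,v⟫ ≠ 0 := (hRpos v hv).ne'
      rw [inner_sub_right, real_inner_smul_right] at hk
      refine ⟨k + q * zr, ?_, ?_⟩
      · rw [inner_sub_left, real_inner_smul_left, real_inner_comm β v]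
        have key2 : (2*(⟪x,v⟫-r)/⟪v,v⟫) * ⟪β,v⟫
            = 2*⟪β,v⟫/⟪v,v⟫*⟪x,v⟫ - r*(2*⟪β,v⟫/⟪v,v⟫) := by
          field_simp
        rw [key2, hzr]
        push_cast
        linarith [hk]
      · intro hdvd
        have h2 : (q:ℤ) ∣ (k + q*zr) - q*zr := dvd_sub hdvd (dvd_mul_right _ _)
        simpa using hdk (by simpa using h2)
    -- either we are in the fundamental alcove, or we can move closer to p
    have hstep : ∀ x : V, (∀ β ∈ R, ∃ k : ℤ, ⟪x, β⟫ = (k:ℝ) ∧ ¬ ((q:ℤ) ∣ k)) →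
        (h ≤ q) ∨ ∃ x' : V, (∀ β ∈ R, ∃ k : ℤ, ⟪x', β⟫ = (k:ℝ) ∧ ¬ ((q:ℤ) ∣ k)) ∧
          ‖x' - p‖^2 ≤ ‖x - p‖^2 - δ := by
      intro x hx
      have hkα : ∀ i, ∃ k : ℤ, ⟪x, α i⟫ = (k:ℝ) ∧ ¬ ((q:ℤ) ∣ k) :=
        fun i => hx _ (hPR (hαP i))
      by_cases hA : ∀ i, 0 < ⟪x, α i⟫
      · obtain ⟨kθ, hkθ, hdθ⟩ := hx θ hθR
        by_cases hB : ⟪x, θ⟫ < (q:ℝ)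
        · -- conclude h ≤ q
          left
          have h1 : ∀ i, (1:ℝ) ≤ ⟪x, α i⟫ := by
            intro i
            obtain ⟨k, hk, _⟩ := hkα i
            have hk0 : (0:ℝ) < (k:ℝ) := hk ▸ hA i
            have : (1:ℤ) ≤ k := by exact_mod_cast hk0
            rw [hk]; exact_mod_cast this
          have h2 : (∑ i, (nvec i : ℝ)) ≤ ⟪x, θ⟫ := by
            rw [hθval]
            apply Finset.sum_le_sum
            intro i _
            have hni : (0:ℝ) ≤ (nvec i : ℝ) := Nat.cast_nonneg _
            nlinarith [h1 i]
          have h3 : ((h:ℝ) - 1) < (q:ℝ) := by rw [← hsum]; linarith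
          have : (h:ℝ) < (q:ℝ) + 1 := by linarith
          have : h < q + 1 := by exact_mod_cast this
          omega
        · -- move with the highest root
          right
          have hxθq : ⟪x, θ⟫ ≠ (q:ℝ) := by
            intro heq
            apply hdθ
            have : (kθ:ℝ) = ((q:ℤ):ℝ) := by rw [← hkθ, heq]; norm_num
            have : kθ = (q:ℤ) := by exact_mod_cast this
            rw [this]
          have hgt : (q:ℝ) < ⟪x, θ⟫ := lt_of_le_of_ne (not_lt.mp hB) (Ne.symm hxθq)
          have ht1 : (q:ℝ) + 1 ≤ ⟪x, θ⟫ := by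
            have : ((q:ℤ):ℝ) < (kθ:ℝ) := by rw [← hkθ]; exact_mod_cast hgt
            have : (q:ℤ) + 1 ≤ kθ := by exact_mod_cast this
            rw [hkθ]; exact_mod_cast this
          refine ⟨x - (2*(⟪x,θ⟫-(q:ℝ))/⟪θ,θ⟫) • θ,
            hmove θ hθR (q:ℝ) ?_ x hx, ?_⟩
          · intro β hβ
            obtain ⟨zc, hzc⟩ := hR.crystallographic θ hθR β hβ
            refine ⟨zc, ?_⟩
            have : 2*⟪β,θ⟫/⟪θ,θ⟫ = (zc:ℝ) := by
              rw [hzc]; field_simp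
            rw [this]
          · rw [reflect_dist θ p x (q:ℝ) hθθpos.ne']
            have hpθq : ⟪p,θ⟫ - (q:ℝ) = -((q:ℝ)/(h:ℝ)) := by
              rw [hpθ]; field_simp; ring
            rw [hpθq]
            have e2 : (4:ℝ)/C ≤ 4/⟪θ,θ⟫ := by
              apply div_le_div_of_nonneg_left (by norm_num) hθθpos hCθ
            have e3 : (4:ℝ)/⟪θ,θ⟫ ≤ 4*(⟪x,θ⟫-(q:ℝ))/⟪θ,θ⟫ :=
              (div_le_div_iff_of_pos_right hθθpos).mpr (by linarith)
            have e4 : (4*(⟪x,θ⟫-(q:ℝ))/⟪θ,θ⟫)*(-((q:ℝ)/(h:ℝ))) ≤ -δ := by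
              rw [hδeq]
              have t1 := mul_le_mul_of_nonneg_right (le_trans e2 e3) hqh.le
              nlinarith [t1]
            linarith [e4]
      · -- move with a simple root
        right
        push_neg at hA
        obtain ⟨i, hAi⟩ := hA
        obtain ⟨k, hk, hdk⟩ := hkα i
        have hkneg : ⟪x, α i⟫ ≤ -1 := by
          have h0 : (k:ℝ) ≤ 0 := by rw [← hk]; exact hAi
          have hne0 : k ≠ 0 := by
            intro h0'
            apply hdk
            rw [h0']
            exact dvd_zero _
          have : k ≤ -1 := by
            have : (k:ℝ) ≤ 0 := h0
            have hk0 : k ≤ 0 := by exact_mod_cast this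
            omega
          rw [hk]; exact_mod_cast this
        have hsi : 0 < ⟪α i, α i⟫ := hααpos i
        refine ⟨x - (2*(⟪x,α i⟫-(0:ℝ))/⟪α i,α i⟫) • α i,
          hmove (α i) (hPR (hαP i)) 0 (fun β hβ => ⟨0, by push_cast; ring⟩) x hx, ?_⟩
        rw [reflect_dist (α i) p x 0 hsi.ne']
        simp only [sub_zero]
        rw [hpα i]
        have e2 : (4:ℝ)/C ≤ 4/⟪α i, α i⟫ := by
          apply div_le_div_of_nonneg_left (by norm_num) hsi (hCα i)
        have e3 : 4*⟪x,α i⟫/⟪α i, α i⟫ ≤ (-4)/⟪α i, α i⟫ :=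
          (div_le_div_iff_of_pos_right hsi).mpr (by linarith)
        have e4 : (4*⟪x,α i⟫/⟪α i, α i⟫)*((q:ℝ)/(h:ℝ)) ≤ -δ := by
          rw [hδeq]
          have t1 := mul_le_mul_of_nonneg_right e3 hqh.le
          have t2 : ((-4)/⟪α i, α i⟫)*((q:ℝ)/(h:ℝ)) ≤ (-(4/C))*((q:ℝ)/(h:ℝ)) := by
            apply mul_le_mul_of_nonneg_right ?_ hqh.le
            rw [neg_div]
            linarith [e2]
          calc (4*⟪x,α i⟫/⟪α i, α i⟫)*((q:ℝ)/(h:ℝ)) ≤ ((-4)/⟪α i, α i⟫)*((q:ℝ)/(h:ℝ)) := t1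
            _ ≤ (-(4/C))*((q:ℝ)/(h:ℝ)) := t2
            _ = -((4/C)*((q:ℝ)/(h:ℝ))) := by ring
        linarith [e4]
    -- induction on the distance to p
    have key : ∀ N : ℕ, ∀ x : V, (∀ β ∈ R, ∃ k : ℤ, ⟪x, β⟫ = (k:ℝ) ∧ ¬ ((q:ℤ) ∣ k)) →
        ‖x - p‖^2 ≤ (N:ℝ) * δ → h ≤ q := by
      intro N
      induction N with
      | zero =>
        intro x hx hb
        rcases hstep x hx with hdone | ⟨x', _, hb'⟩
        · exact hdone
        · exfalso
          have := sq_nonneg ‖x' - p‖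
          push_cast at hb
          nlinarith
      | succ N ih =>
        intro x hx hb
        rcases hstep x hx with hdone | ⟨x', hx', hb'⟩
        · exact hdone
        · apply ih x' hx'
          push_cast at hb ⊢
          linarith
    -- the starting point
    set x₀ : V := ∑ i, ((z i).val : ℝ) • d i with hx₀def
    have hx₀α : ∀ i, ⟪x₀, α i⟫ = ((z i).val : ℝ) := by
      intro i
      rw [hx₀def]
      exact hXα (fun i => ((z i).val : ℝ)) i
    have hPint : ∀ β' ∈ P, ∃ k : ℤ, ⟪x₀, β'⟫ = (k:ℝ) ∧ ¬ ((q:ℤ) ∣ k) := by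
      intro β' hβ'
      set j := ρ.symm ⟨β', hβ'⟩ with hjdef
      have hρj : (ρ j : V) = β' := by rw [hjdef, Equiv.apply_symm_apply]
      refine ⟨∑ i, S i j * ((z i).val : ℤ), ?_, ?_⟩
      · rw [← hρj, hval]
        push_cast
        apply Finset.sum_congr rfl
        intro i _
        rw [hx₀α]
      · intro hdvd
        apply hz j
        rw [hvm]
        have h0 : ((∑ i, S i j * ((z i).val : ℤ) : ℤ) : ZMod q) = 0 := by
          rw [ZMod.intCast_zmod_eq_zero_iff_dvd]
          exact hdvd
        calc ∑ i, z i * (S i j : ZMod q)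
            = ((∑ i, S i j * ((z i).val : ℤ) : ℤ) : ZMod q) := by
              push_cast
              apply Finset.sum_congr rfl
              intro i _
              rw [ZMod.natCast_val, ZMod.cast_id, mul_comm]
          _ = 0 := h0
    have hx₀int : ∀ β ∈ R, ∃ k : ℤ, ⟪x₀, β⟫ = (k:ℝ) ∧ ¬ ((q:ℤ) ∣ k) := by
      intro β hβ
      rcases hPpos β hβ with hβP | hβP
      · exact hPint β hβP
      · obtain ⟨k, hk, hdk⟩ := hPint (-β) hβP
        rw [inner_neg_right] at hk
        refine ⟨-k, by push_cast; linarith, fun hdvd => hdk (dvd_neg.mp hdvd)⟩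
    exact key ⌈‖x₀ - p‖^2 / δ⌉₊ x₀ hx₀int
      ((div_le_iff₀ hδpos).mp (Nat.le_ceil _))
  · -- easy direction : q ≥ h gives a point
    intro hhq
    rw [chiCount]
    have hwit : ∀ j, Matrix.vecMul (fun _ => (1 : ZMod q))
        (S.map (fun a => (a : ZMod q))) j ≠ 0 := by
      intro j
      rw [hvm]
      simp only [one_mul]
      have hcast : (∑ i, (S i j : ZMod q)) = ((∑ i, S i j : ℤ) : ZMod q) := by
        push_cast; rfl
      rw [hcast, Ne, ZMod.intCast_zmod_eq_zero_iff_dvd]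
      intro hdvd
      have hle := Int.le_of_dvd (hcolpos j) hdvd
      have h2 : (∑ i, (nvec i : ℤ)) = ((∑ i, nvec i : ℕ) : ℤ) := by push_cast; rfl
      have h3 := hcolle j
      rw [h2] at h3
      have : ((q:ℤ)) ≤ ((∑ i, nvec i : ℕ) : ℤ) := le_trans hle h3
      have : q ≤ ∑ i, nvec i := by exact_mod_cast this
      omega
    haveI : Nonempty {z : Fin m → ZMod q //
        ∀ j, Matrix.vecMul z (S.map (fun a => (a : ZMod q))) j ≠ 0} :=
      ⟨⟨fun _ => 1, hwit⟩⟩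
    exact Nat.card_pos
end

section
/- Let m ≥ 2. For every positive integer q, χ_{B_m}(q) = χ_{C_m}(q); that is, the characteristic quasi-polynomials of the root systems B_m and C_m coincide. -/
set_option linter.unusedSectionVars false
set_option maxHeartbeats 1000000

open Finset

section zmodlemmas

variable {q : ℕ}

lemma odd_half_mul (hq : Odd q) (c : ZMod q) : 2 * (((q + 1) / 2 : ℕ) : ZMod q) * c = c := by
  obtain ⟨k, hk⟩ := hq
  have hq1 : ((q : ℕ) : ZMod q) = 0 := ZMod.natCast_self q
  have h1 : ((2 * ((q+1)/2) : ℕ) : ZMod q) = 1 := by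
    rw [show 2 * ((q+1)/2) = q + 1 by omega]
    push_cast [hq1]
    ring
  calc 2 * (((q + 1) / 2 : ℕ) : ZMod q) * c = ((2 * ((q+1)/2) : ℕ) : ZMod q) * c := by
        push_cast; ring
    _ = c := by rw [h1, one_mul]

lemma odd_two_mul_eq_zero (hq : Odd q) {x : ZMod q} (h : 2 * x = 0) : x = 0 := by
  have h2 := odd_half_mul hq x
  calc x = 2 * (((q + 1) / 2 : ℕ) : ZMod q) * x := h2.symm
    _ = (((q + 1) / 2 : ℕ) : ZMod q) * (2 * x) := by ring
    _ = 0 := by rw [h, mul_zero]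

lemma odd_two_mul_inj (hq : Odd q) {x y : ZMod q} (h : 2 * x = 2 * y) : x = y := by
  have h0 : 2 * (x - y) = 0 := by linear_combination h
  exact sub_eq_zero.mp (odd_two_mul_eq_zero hq h0)

lemma even_two_mul_half (hq2 : 2 ∣ q) : 2 * ((q / 2 : ℕ) : ZMod q) = 0 := by
  have h1 : (2 : ZMod q) * ((q/2 : ℕ) : ZMod q) = ((2 * (q/2) : ℕ) : ZMod q) := by
    push_cast; ring
  rw [h1, show 2 * (q/2) = q from by omega, ZMod.natCast_self]

lemma even_half_ne_zero [NeZero q] (hq2 : 2 ∣ q) : ((q / 2 : ℕ) : ZMod q) ≠ 0 := by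
  intro h
  have hd := (ZMod.natCast_eq_zero_iff _ _).mp h
  have hq0 : 0 < q := Nat.pos_of_ne_zero (NeZero.ne q)
  have h2 : 0 < q / 2 := by omega
  have := Nat.le_of_dvd h2 hd
  omega

lemma even_two_mul_eq_zero_iff [NeZero q] (hq2 : 2 ∣ q) {x : ZMod q} :
    2 * x = 0 ↔ x = 0 ∨ x = ((q / 2 : ℕ) : ZMod q) := by
  have hq0 : 0 < q := Nat.pos_of_ne_zero (NeZero.ne q)
  constructor
  · intro h
    have hx : ((x.val : ℕ) : ZMod q) = x := ZMod.natCast_rightInverse x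
    have h2 : ((2 * x.val : ℕ) : ZMod q) = 0 := by push_cast [hx]; linear_combination h
    have hdvd : q ∣ 2 * x.val := (ZMod.natCast_eq_zero_iff _ _).mp h2
    have hlt : x.val < q := ZMod.val_lt x
    obtain ⟨c, hc⟩ := hdvd
    have hc2 : c < 2 := by
      by_contra hge
      push_neg at hge
      have : 2 * q ≤ q * c := by
        calc 2 * q = q * 2 := by ring
          _ ≤ q * c := Nat.mul_le_mul_left q hge
      omega
    interval_cases c
    · left
      rw [← hx, show x.val = 0 from by omega, Nat.cast_zero]
    · right
      rw [← hx, show x.val = q / 2 from by omega]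
  · rintro (rfl | rfl)
    · rw [mul_zero]
    · exact even_two_mul_half hq2

lemma even_two_mul_inj_iff [NeZero q] (hq2 : 2 ∣ q) {x y : ZMod q} :
    2 * x = 2 * y ↔ x = y ∨ x = y + ((q / 2 : ℕ) : ZMod q) := by
  constructor
  · intro h
    have h0 : 2 * (x - y) = 0 := by linear_combination h
    rcases (even_two_mul_eq_zero_iff hq2).mp h0 with h1 | h1
    · left; linear_combination h1
    · right; linear_combination h1
  · rintro (rfl | rfl)
    · rfl
    · have := even_two_mul_half (q := q) hq2
      ring_nf
      linear_combination this

end zmodlemmas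

open Finset

variable {α : Type*} [Fintype α] [DecidableEq α]

def PairPred (σ : α → α) (F : Finset α) {n : ℕ} (w : Fin n → α) : Prop :=
  (∀ i, w i ∉ F) ∧ ∀ i j : Fin n, i < j → w i ≠ w j ∧ w i ≠ σ (w j)

lemma pairPred_symm {σ : α → α} (hσ : ∀ x, σ (σ x) = x) {F : Finset α} {n : ℕ}
    {w : Fin n → α} (h : PairPred σ F w) :
    ∀ i j, i ≠ j → w i ≠ w j ∧ w i ≠ σ (w j) := by
  intro i j hij
  rcases lt_or_gt_of_ne hij with hlt | hgt
  · exact h.2 i j hlt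
  · have h' := h.2 j i hgt
    refine ⟨fun hc => h'.1 hc.symm, fun hc => h'.2 ?_⟩
    rw [hc, hσ]

lemma pair_fixed_at (σ : α → α) (hσ : ∀ x, σ (σ x) = x) (F : Finset α)
    (e : α) (he : σ e = e) (heF : e ∉ F) (k : ℕ) (i : Fin (k+1)) :
    Nat.card {w : Fin (k+1) → α // PairPred σ F w ∧ w i = e} =
      Nat.card {v : Fin k → α // PairPred σ (insert e F) v} := by
  apply Nat.card_congr
  refine ⟨fun w => ⟨fun j => w.1 (i.succAbove j), ?_⟩,
    fun v => ⟨Fin.insertNth i e v.1, ?_, ?_⟩, ?_, ?_⟩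
  · obtain ⟨w, ⟨h1, h2⟩, hi⟩ := w
    constructor
    · intro j
      rw [mem_insert]
      push_neg
      refine ⟨?_, h1 _⟩
      have hne := (pairPred_symm hσ ⟨h1, h2⟩ _ _ (i.succAbove_ne j)).1
      exact fun hc => hne (hc.trans hi.symm)
    · intro a b hab
      exact h2 _ _ (Fin.succAbove_lt_succAbove_iff.mpr hab)
  · obtain ⟨v, hv1, hv2⟩ := v
    have hsym := pairPred_symm hσ ⟨hv1, hv2⟩
    have hnotF : ∀ j, v j ∉ F := fun j hc => hv1 j (mem_insert_of_mem hc)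
    have hne : ∀ j, v j ≠ e := fun j hc => hv1 j (hc ▸ mem_insert_self _ _)
    constructor
    · intro j
      refine Fin.succAboveCases i ?_ ?_ j
      · rw [Fin.insertNth_apply_same]; exact heF
      · intro j'
        rw [Fin.insertNth_apply_succAbove]
        exact hnotF j'
    · intro a b hab
      have key : ∀ a b : Fin (k+1), a ≠ b →
          Fin.insertNth (α := fun _ => α) i e v a ≠ Fin.insertNth (α := fun _ => α) i e v b ∧
          Fin.insertNth (α := fun _ => α) i e v a ≠
            σ (Fin.insertNth (α := fun _ => α) i e v b) := by
        intro a b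
        refine Fin.succAboveCases i ?_ ?_ b
        · refine Fin.succAboveCases i ?_ ?_ a
          · intro h; exact absurd rfl h
          · intro a' _
            rw [Fin.insertNth_apply_same, Fin.insertNth_apply_succAbove, he]
            exact ⟨hne a', hne a'⟩
        · intro b'
          refine Fin.succAboveCases i ?_ ?_ a
          · intro _
            rw [Fin.insertNth_apply_same, Fin.insertNth_apply_succAbove]
            exact ⟨fun hc => hne b' hc.symm,
              fun hc => hne b' (by rw [← hσ (v b'), ← hc, he])⟩
          · intro a' hab'
            rw [Fin.insertNth_apply_succAbove, Fin.insertNth_apply_succAbove]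
            have hne' : a' ≠ b' := fun hc => hab' (by rw [hc])
            exact hsym a' b' hne'
      exact key a b (ne_of_lt hab)
  · simp
  · intro w
    apply Subtype.ext
    funext j
    refine Fin.succAboveCases i ?_ ?_ j
    · simp [w.2.2]
    · intro j'
      simp
  · intro v
    apply Subtype.ext
    funext j
    simp

lemma pair_count (σ : α → α) (hσ : ∀ x, σ (σ x) = x) (F : Finset α)
    (hF : ∀ x ∈ F, σ x ∈ F) (hfix : ∀ x, σ x = x → x ∈ F) (n : ℕ) :
    Nat.card {w : Fin n → α // PairPred σ F w} =
      ∏ j ∈ Finset.range n, (Fintype.card α - F.card - 2 * j) := by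
  have hσinj : Function.Injective σ := Function.LeftInverse.injective hσ
  induction n with
  | zero =>
      have h : ∀ w : Fin 0 → α, PairPred σ F w := by
        intro w
        exact ⟨fun i => i.elim0, fun i j _ => i.elim0⟩
      rw [Nat.card_congr (Equiv.subtypeUnivEquiv h)]
      simp [Nat.card_eq_fintype_card]
  | succ n ih =>
      classical
      -- the sigma equivalence
      have e : {w : Fin (n+1) → α // PairPred σ F w} ≃
          Σ w : {w : Fin n → α // PairPred σ F w},
            {a : α // a ∉ F ∧ ∀ i, a ≠ w.1 i ∧ a ≠ σ (w.1 i)} := by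
        refine ⟨fun w => ⟨⟨Fin.init w.1, ?_⟩, ⟨w.1 (Fin.last n), ?_, ?_⟩⟩,
          fun p => ⟨Fin.snoc p.1.1 p.2.1, ?_⟩, ?_, ?_⟩
        · obtain ⟨w, h1, h2⟩ := w
          refine ⟨fun i => h1 _, fun i j hij => h2 _ _ ?_⟩
          exact Fin.castSucc_lt_castSucc_iff.mpr hij
        · exact w.2.1 _
        · intro i
          have h := w.2.2 (Fin.castSucc i) (Fin.last n) (Fin.castSucc_lt_last i)
          refine ⟨fun hc => h.1 hc.symm, fun hc => h.2 ?_⟩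
          rw [hc, hσ]; rfl
        · obtain ⟨⟨w, h1, h2⟩, ⟨a, ha1, ha2⟩⟩ := p
          constructor
          · intro i
            refine Fin.lastCases ?_ ?_ i
            · simpa using ha1
            · intro i; simpa using h1 i
          · intro i j
            refine Fin.lastCases ?_ ?_ j
            · intro hij'
              have hi : i ≠ Fin.last n := ne_of_lt hij'
              obtain ⟨i', rfl⟩ := Fin.exists_castSucc_eq.mpr hi
              simp only [Fin.snoc_castSucc, Fin.snoc_last]
              have := ha2 i'
              exact ⟨fun hc => this.1 hc.symm,
                fun hc => this.2 (show a = σ (w i') by rw [hc, hσ])⟩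
            · intro j' hij'
              have hi : i ≠ Fin.last n := ne_of_lt (lt_of_lt_of_le hij' (Fin.le_last _))
              obtain ⟨i', rfl⟩ := Fin.exists_castSucc_eq.mpr hi
              simp only [Fin.snoc_castSucc]
              exact h2 i' j' (Fin.castSucc_lt_castSucc_iff.mp hij')
        · intro w
          apply Subtype.ext
          exact Fin.snoc_init_self w.1
        · rintro ⟨⟨w, hw⟩, ⟨a, ha⟩⟩
          refine Sigma.subtype_ext (Subtype.ext ?_) ?_
          · simp
          · simp
      rw [Nat.card_congr e, Nat.card_eq_fintype_card, Fintype.card_sigma]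
      have hfib : ∀ w : {w : Fin n → α // PairPred σ F w},
          Fintype.card {a : α // a ∉ F ∧ ∀ i, a ≠ w.1 i ∧ a ≠ σ (w.1 i)} =
            Fintype.card α - F.card - 2 * n := by
        intro ⟨w, h1, h2⟩
        have hwinj : Function.Injective w := by
          intro i j hij
          rcases lt_trichotomy i j with h | h | h
          · exact absurd hij (h2 i j h).1
          · exact h
          · exact absurd hij.symm (h2 j i h).1
        set G : Finset α := (F ∪ image w univ) ∪ image (σ ∘ w) univ with hG
        have hGcard : G.card = F.card + n + n := by
          rw [hG, card_union_of_disjoint, card_union_of_disjoint,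
            card_image_of_injective _ hwinj,
            card_image_of_injective _ (hσinj.comp hwinj), card_univ, Fintype.card_fin]
          · rw [disjoint_left]
            intro x hx hx'
            simp only [mem_image, mem_univ, true_and] at hx'
            obtain ⟨i, rfl⟩ := hx'
            exact h1 i hx
          · rw [disjoint_left]
            intro x hx hx'
            simp only [mem_image, mem_univ, true_and, Function.comp] at hx'
            obtain ⟨i, rfl⟩ := hx'
            rcases mem_union.mp hx with hx | hx
            · exact h1 i (by simpa [hσ] using hF _ hx)
            · simp only [mem_image, mem_univ, true_and] at hx
              obtain ⟨j, hj⟩ := hx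
              rcases lt_trichotomy j i with h | h | h
              · exact (h2 j i h).2 hj
              · subst h
                exact h1 j (hfix _ hj.symm)
              · refine (h2 i j h).2 ?_
                conv_lhs => rw [← hσ (w i), ← hj]
        have hiff : ∀ a : α, (a ∉ F ∧ ∀ i, a ≠ w i ∧ a ≠ σ (w i)) ↔ a ∈ univ \ G := by
          intro a
          simp only [mem_sdiff, mem_univ, true_and, hG, mem_union, mem_image, mem_univ,
            true_and, Function.comp, not_or, not_exists]
          constructor
          · rintro ⟨haF, ha⟩
            exact ⟨⟨haF, fun i hi => (ha i).1 hi.symm⟩, fun i hi => (ha i).2 hi.symm⟩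
          · rintro ⟨⟨haF, ha1⟩, ha2⟩
            exact ⟨haF, fun i => ⟨fun hc => ha1 i hc.symm, fun hc => ha2 i hc.symm⟩⟩
        calc Fintype.card {a : α // a ∉ F ∧ ∀ i, a ≠ w i ∧ a ≠ σ (w i)}
            = Nat.card {a : α // a ∉ F ∧ ∀ i, a ≠ w i ∧ a ≠ σ (w i)} :=
              Nat.card_eq_fintype_card.symm
          _ = Nat.card {a : α // a ∈ univ \ G} :=
              Nat.card_congr (Equiv.subtypeEquivRight hiff)
          _ = (univ \ G).card := Nat.card_eq_finsetCard _
          _ = Fintype.card α - F.card - 2 * n := by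
              rw [card_sdiff_of_subset (subset_univ G), card_univ, hGcard]
              omega
      calc (∑ w : {w : Fin n → α // PairPred σ F w},
              Fintype.card {a : α // a ∉ F ∧ ∀ i, a ≠ w.1 i ∧ a ≠ σ (w.1 i)})
          = ∑ _w : {w : Fin n → α // PairPred σ F w},
              (Fintype.card α - F.card - 2 * n) := by
            exact Finset.sum_congr rfl fun w _ => hfib w
        _ = Fintype.card {w : Fin n → α // PairPred σ F w} *
              (Fintype.card α - F.card - 2 * n) := by
            rw [Finset.sum_const, card_univ, smul_eq_mul]
        _ = (∏ j ∈ Finset.range n, (Fintype.card α - F.card - 2 * j)) *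
              (Fintype.card α - F.card - 2 * n) := by
            rw [← Nat.card_eq_fintype_card, ih]
        _ = ∏ j ∈ Finset.range (n+1), (Fintype.card α - F.card - 2 * j) := by
            rw [Finset.prod_range_succ]

section Bcount

variable {q : ℕ} [NeZero q]

lemma neg_fix_odd (hq : Odd q) (x : ZMod q) (h : -x = x) : x = 0 := by
  have h2 : 2 * x = 0 := by linear_combination -h
  exact odd_two_mul_eq_zero hq h2

def BPred {n : ℕ} (z : Fin n → ZMod q) : Prop :=
  (∀ i, z i ≠ 0) ∧ ∀ i j : Fin n, i < j → z i ≠ z j ∧ z i + z j ≠ 0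

lemma BPred_iff_pairPred {n : ℕ} (z : Fin n → ZMod q) :
    BPred z ↔ PairPred (fun x : ZMod q => -x) {0} z := by
  unfold BPred PairPred
  constructor
  · rintro ⟨h1, h2⟩
    refine ⟨fun i => by simpa using h1 i, fun i j hij => ⟨(h2 i j hij).1, fun hc => ?_⟩⟩
    exact (h2 i j hij).2 (by rw [hc]; ring)
  · rintro ⟨h1, h2⟩
    refine ⟨fun i => by simpa using h1 i, fun i j hij => ⟨(h2 i j hij).1, fun hc => ?_⟩⟩
    exact (h2 i j hij).2 (by linear_combination hc)

lemma count_B_odd (hq : Odd q) (n : ℕ) :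
    Nat.card {z : Fin n → ZMod q // BPred z} = ∏ j ∈ Finset.range n, (q - 1 - 2 * j) := by
  rw [Nat.card_congr (Equiv.subtypeEquivRight (BPred_iff_pairPred (q := q) (n := n)))]
  rw [pair_count (fun x : ZMod q => -x) (fun x => neg_neg x) {0} (by simp)
    (fun x hx => by simpa using neg_fix_odd hq x hx) n]
  simp [ZMod.card]

lemma count_B_even (hq2 : 2 ∣ q) (n : ℕ) :
    Nat.card {z : Fin (n+1) → ZMod q // BPred z} =
      (∏ j ∈ Finset.range (n+1), (q - 2 - 2 * j)) +
        (n+1) * ∏ j ∈ Finset.range n, (q - 2 - 2 * j) := by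
  classical
  set h2 : ZMod q := ((q / 2 : ℕ) : ZMod q) with hh2
  have hh2ne : h2 ≠ 0 := even_half_ne_zero hq2
  have hh2fix : -h2 = h2 := by
    have := even_two_mul_half (q := q) hq2
    linear_combination -this
  have hfix : ∀ x : ZMod q, -x = x → x ∈ ({0, h2} : Finset (ZMod q)) := by
    intro x hx
    have hx2 : 2 * x = 0 := by linear_combination -hx
    rcases (even_two_mul_eq_zero_iff hq2).mp hx2 with h | h <;> simp [h, hh2]
  have hF2 : ∀ x ∈ ({0, h2} : Finset (ZMod q)), -x ∈ ({0, h2} : Finset (ZMod q)) := by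
    intro x hx
    rcases Finset.mem_insert.mp hx with h | h
    · simp [h]
    · rw [Finset.mem_singleton.mp h, hh2fix]
      simp
  have hF2card : ({0, h2} : Finset (ZMod q)).card = 2 := by
    rw [Finset.card_insert_of_notMem (by simpa using hh2ne.symm), Finset.card_singleton]
  set P : (Fin (n+1) → ZMod q) → Prop := PairPred (fun x : ZMod q => -x) {0} with hP
  -- step 1: convert BPred to P
  rw [Nat.card_congr (Equiv.subtypeEquivRight (BPred_iff_pairPred (q := q) (n := n+1)))]
  -- step 2: split by whether some coordinate is h2
  have esplit : {z : Fin (n+1) → ZMod q // P z} ≃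
      {z : Fin (n+1) → ZMod q // P z ∧ (∀ i, z i ≠ h2)} ⊕
      {z : Fin (n+1) → ZMod q // P z ∧ ¬(∀ i, z i ≠ h2)} :=
    (Equiv.sumCompl (fun z : {z : Fin (n+1) → ZMod q // P z} => ∀ i, z.1 i ≠ h2)).symm.trans
      (Equiv.sumCongr
        (Equiv.subtypeSubtypeEquivSubtypeInter P (fun z => ∀ i, z i ≠ h2))
        (Equiv.subtypeSubtypeEquivSubtypeInter P (fun z => ¬∀ i, z i ≠ h2)))
  rw [Nat.card_congr esplit, Nat.card_sum]
  congr 1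
  · -- avoid-h2 part
    have hiff : ∀ z : Fin (n+1) → ZMod q,
        (P z ∧ (∀ i, z i ≠ h2)) ↔ PairPred (fun x : ZMod q => -x) {0, h2} z := by
      intro z
      unfold P
      unfold PairPred
      constructor
      · rintro ⟨⟨ha, hb⟩, hc⟩
        refine ⟨fun i => ?_, hb⟩
        simp only [Finset.mem_insert, Finset.mem_singleton]
        push_neg
        exact ⟨by simpa using ha i, hc i⟩
      · rintro ⟨ha, hb⟩
        refine ⟨⟨fun i => ?_, hb⟩, fun i => ?_⟩
        · have := ha i
          simp only [Finset.mem_insert, Finset.mem_singleton] at this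
          push_neg at this
          simpa using this.1
        · have := ha i
          simp only [Finset.mem_insert, Finset.mem_singleton] at this
          push_neg at this
          exact this.2
    rw [Nat.card_congr (Equiv.subtypeEquivRight hiff)]
    rw [pair_count (fun x : ZMod q => -x) (fun x => neg_neg x) {0, h2} hF2 hfix (n+1)]
    rw [hF2card, ZMod.card]
  · -- contains-h2 part
    have hiff : ∀ z : Fin (n+1) → ZMod q,
        (P z ∧ ¬(∀ i, z i ≠ h2)) ↔ (P z ∧ ∃ i, z i = h2) := by
      intro z
      rw [not_forall]
      simp only [not_not]
    rw [Nat.card_congr (Equiv.subtypeEquivRight hiff)]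
    rw [Nat.card_eq_fintype_card, Fintype.card_subtype]
    have hbi : Finset.univ.filter (fun z : Fin (n+1) → ZMod q => P z ∧ ∃ i, z i = h2) =
        Finset.univ.biUnion (fun i : Fin (n+1) =>
          Finset.univ.filter (fun z : Fin (n+1) → ZMod q => P z ∧ z i = h2)) := by
      ext z
      simp only [Finset.mem_filter, Finset.mem_biUnion, Finset.mem_univ, true_and]
      tauto
    rw [hbi, Finset.card_biUnion]
    · have hone : ∀ i : Fin (n+1),
          (Finset.univ.filter (fun z : Fin (n+1) → ZMod q => P z ∧ z i = h2)).card =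
            ∏ j ∈ Finset.range n, (q - 2 - 2 * j) := by
        intro i
        have : (Finset.univ.filter (fun z : Fin (n+1) → ZMod q => P z ∧ z i = h2)).card =
            Nat.card {z : Fin (n+1) → ZMod q // P z ∧ z i = h2} := by
          rw [Nat.card_eq_fintype_card, Fintype.card_subtype]
        rw [this, hP]
        rw [pair_fixed_at (fun x : ZMod q => -x) (fun x => neg_neg x) {0} h2 hh2fix
          (by simpa using hh2ne) n i]
        have hpair : (insert h2 {0} : Finset (ZMod q)) = {0, h2} := Finset.pair_comm h2 0
        rw [pair_count (fun x : ZMod q => -x) (fun x => neg_neg x) (insert h2 {0})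
          (by rw [hpair]; exact hF2)
          (fun x hx => by rw [hpair]; exact hfix x hx) n]
        rw [hpair, hF2card, ZMod.card]
      rw [Finset.sum_congr rfl (fun i _ => hone i), Finset.sum_const, Finset.card_univ,
        Fintype.card_fin, smul_eq_mul]
    · intro i _ j _ hij
      unfold Function.onFun
      rw [Finset.disjoint_left]
      intro z hz hz'
      simp only [Finset.mem_filter, Finset.mem_univ, true_and] at hz hz'
      have := (pairPred_symm (fun x => neg_neg x) hz.1 i j hij).1
      rw [hz.2, hz'.2] at this
      exact this rfl

end Bcount

section Ccount

variable {q : ℕ} [NeZero q]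

def Ft (q : ℕ) [NeZero q] (t : ZMod q) : Finset (ZMod q) :=
  insert 0 (insert (-t) (Finset.univ.filter (fun x => 2 * x = -t)))

lemma mem_Ft {t x : ZMod q} : x ∈ Ft q t ↔ x = 0 ∨ x = -t ∨ 2 * x = -t := by
  simp [Ft]

def CPred {n : ℕ} (z : Fin (n+1) → ZMod q) : Prop :=
  (∀ i j : Fin (n+1), i < j → ∑ k ∈ Finset.Ico i j, z k ≠ 0) ∧
  (∀ i : Fin (n+1), 2 * ∑ k ∈ Finset.Ico i (Fin.last n), z k + z (Fin.last n) ≠ 0) ∧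
  (∀ i j : Fin (n+1), i < j →
    ∑ k ∈ Finset.Ico i j, z k + 2 * ∑ k ∈ Finset.Ico j (Fin.last n), z k +
      z (Fin.last n) ≠ 0)

lemma Ico_split {n : ℕ} (i j : Fin (n+1)) (hij : i ≤ j) (z : Fin (n+1) → ZMod q) :
    ∑ k ∈ Finset.Ico i (Fin.last n), z k =
      (∑ k ∈ Finset.Ico i j, z k) + ∑ k ∈ Finset.Ico j (Fin.last n), z k := by
  have hu : Finset.Ico i (Fin.last n) = Finset.Ico i j ∪ Finset.Ico j (Fin.last n) := by
    ext k
    have hij' : (i : ℕ) ≤ (j : ℕ) := hij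
    have hjl : (j : ℕ) ≤ n := Nat.lt_succ_iff.mp j.isLt
    simp only [Finset.mem_Ico, Finset.mem_union, Fin.lt_def, Fin.le_def, Fin.val_last]
    omega
  rw [hu]
  exact Finset.sum_union (Finset.Ico_disjoint_Ico_consecutive i j (Fin.last n))

lemma Ico_sub {n : ℕ} (i j : Fin (n+1)) (hij : i ≤ j) (z : Fin (n+1) → ZMod q) :
    ∑ k ∈ Finset.Ico i j, z k =
      (∑ k ∈ Finset.Ico i (Fin.last n), z k) - ∑ k ∈ Finset.Ico j (Fin.last n), z k := by
  rw [Ico_split i j hij z]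
  ring

lemma Ico_succ_split {n : ℕ} (i : Fin n) (z : Fin (n+1) → ZMod q) :
    ∑ k ∈ Finset.Ico (Fin.castSucc i) (Fin.last n), z k =
      z (Fin.castSucc i) + ∑ k ∈ Finset.Ico (Fin.succ i) (Fin.last n), z k := by
  rw [Ico_split (Fin.castSucc i) (Fin.succ i) (Fin.castSucc_lt_succ : Fin.castSucc i < Fin.succ i).le z]
  congr 1
  have hsingle : Finset.Ico (Fin.castSucc i) (Fin.succ i) = {Fin.castSucc i} := by
    ext k
    simp only [Finset.mem_Ico, Finset.mem_singleton, Fin.lt_def, Fin.le_def,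
      Fin.coe_castSucc, Fin.val_succ, Fin.ext_iff]
    omega
  rw [hsingle, Finset.sum_singleton]

def Phi {q n : ℕ} (z : Fin (n+1) → ZMod q) : (Fin n → ZMod q) × ZMod q :=
  (fun i => ∑ k ∈ Finset.Ico (Fin.castSucc i) (Fin.last n), z k, z (Fin.last n))

lemma Phi_bijective {n : ℕ} : Function.Bijective (Phi (q := q) (n := n)) := by
  rw [Fintype.bijective_iff_injective_and_card]
  constructor
  · intro z z' h
    have ht : z (Fin.last n) = z' (Fin.last n) := congrArg Prod.snd h
    have hw : ∀ i : Fin n, ∑ k ∈ Finset.Ico (Fin.castSucc i) (Fin.last n), z k =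
        ∑ k ∈ Finset.Ico (Fin.castSucc i) (Fin.last n), z' k :=
      fun i => congrFun (congrArg Prod.fst h) i
    have hT : ∀ i : Fin (n+1), ∑ k ∈ Finset.Ico i (Fin.last n), z k =
        ∑ k ∈ Finset.Ico i (Fin.last n), z' k := by
      intro i
      refine Fin.lastCases ?_ ?_ i
      · rw [Finset.Ico_self, Finset.sum_empty, Finset.sum_empty]
      · exact hw
    funext j
    refine Fin.lastCases ht ?_ j
    intro i
    have h1 := Ico_succ_split i z
    rw [hT (Fin.castSucc i), hT (Fin.succ i)] at h1
    have h2 := Ico_succ_split i z'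
    rw [h2] at h1
    exact (add_right_cancel h1).symm
  · simp [Fintype.card_prod, Fintype.card_fun, pow_succ]

lemma CPred_iff {n : ℕ} (z : Fin (n+1) → ZMod q) :
    CPred z ↔ (z (Fin.last n) ≠ 0 ∧
      PairPred (fun x => -(z (Fin.last n)) - x) (Ft q (z (Fin.last n)))
        (fun i : Fin n => ∑ k ∈ Finset.Ico (Fin.castSucc i) (Fin.last n), z k)) := by
  set t := z (Fin.last n) with htdef
  have hlast0 : ∑ k ∈ Finset.Ico (Fin.last n) (Fin.last n), z k = 0 := by
    rw [Finset.Ico_self, Finset.sum_empty]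
  constructor
  · rintro ⟨h1, h2, h3⟩
    have ht : t ≠ 0 := by
      have := h2 (Fin.last n)
      rwa [hlast0, mul_zero, zero_add] at this
    refine ⟨ht, fun i => ?_, fun i j hij => ⟨fun hc => ?_, fun hc => ?_⟩⟩
    · beta_reduce
      rw [mem_Ft]
      push_neg
      refine ⟨h1 _ _ (Fin.castSucc_lt_last i), fun hc => ?_, fun hc => h2 (Fin.castSucc i) ?_⟩
      · exact h3 _ _ (Fin.castSucc_lt_last i) (by rw [hlast0]; linear_combination hc)
      · linear_combination hc
    · beta_reduce at hc
      refine h1 (Fin.castSucc i) (Fin.castSucc j) (Fin.castSucc_lt_castSucc_iff.mpr hij) ?_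
      rw [Ico_sub (Fin.castSucc i) (Fin.castSucc j)
        (Fin.castSucc_le_castSucc_iff.mpr hij.le) z]
      linear_combination hc
    · beta_reduce at hc
      refine h3 (Fin.castSucc i) (Fin.castSucc j) (Fin.castSucc_lt_castSucc_iff.mpr hij) ?_
      rw [Ico_sub (Fin.castSucc i) (Fin.castSucc j)
        (Fin.castSucc_le_castSucc_iff.mpr hij.le) z]
      linear_combination hc
  · rintro ⟨ht, hmem, hpair⟩
    have hmem' : ∀ i : Fin n,
        (∑ k ∈ Finset.Ico (Fin.castSucc i) (Fin.last n), z k) ≠ 0 ∧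
        (∑ k ∈ Finset.Ico (Fin.castSucc i) (Fin.last n), z k) ≠ -t ∧
        2 * (∑ k ∈ Finset.Ico (Fin.castSucc i) (Fin.last n), z k) ≠ -t := by
      intro i
      have := hmem i
      beta_reduce at this
      rw [mem_Ft] at this
      push_neg at this
      exact this
    refine ⟨?_, ?_, ?_⟩
    · intro i j
      refine Fin.lastCases ?_ ?_ j
      · intro hij
        obtain ⟨i', rfl⟩ := Fin.exists_castSucc_eq.mpr (ne_of_lt hij)
        exact (hmem' i').1
      · intro j' hij
        have hi : i ≠ Fin.last n := by
          intro h
          rw [h] at hij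
          exact absurd (hij.trans (Fin.castSucc_lt_last j')) (lt_irrefl _)
        obtain ⟨i', rfl⟩ := Fin.exists_castSucc_eq.mpr hi
        have hij' : i' < j' := Fin.castSucc_lt_castSucc_iff.mp hij
        rw [Ico_sub (Fin.castSucc i') (Fin.castSucc j') hij.le z]
        intro hc
        exact (hpair i' j' hij').1 (by beta_reduce; linear_combination hc)
    · intro i
      refine Fin.lastCases ?_ ?_ i
      · rw [hlast0, mul_zero, zero_add]
        exact ht
      · intro i'
        intro hc
        exact (hmem' i').2.2 (by linear_combination hc)
    · intro i j
      refine Fin.lastCases ?_ ?_ j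
      · intro hij
        obtain ⟨i', rfl⟩ := Fin.exists_castSucc_eq.mpr (ne_of_lt hij)
        rw [hlast0, mul_zero, add_zero]
        intro hc
        exact (hmem' i').2.1 (by linear_combination hc)
      · intro j' hij
        have hi : i ≠ Fin.last n := by
          intro h
          rw [h] at hij
          exact absurd (hij.trans (Fin.castSucc_lt_last j')) (lt_irrefl _)
        obtain ⟨i', rfl⟩ := Fin.exists_castSucc_eq.mpr hi
        have hij' : i' < j' := Fin.castSucc_lt_castSucc_iff.mp hij
        rw [Ico_sub (Fin.castSucc i') (Fin.castSucc j') hij.le z]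
        intro hc
        exact (hpair i' j' hij').2 (by beta_reduce; linear_combination hc)

lemma count_C (n : ℕ) :
    Nat.card {z : Fin (n+1) → ZMod q // CPred z} =
      ∑ t : ZMod q,
        (if t = 0 then 0 else ∏ j ∈ Finset.range n, (q - (Ft q t).card - 2 * j)) := by
  classical
  have e1 : {z : Fin (n+1) → ZMod q // CPred z} ≃
      {p : (Fin n → ZMod q) × ZMod q //
        p.2 ≠ 0 ∧ PairPred (fun x => -p.2 - x) (Ft q p.2) p.1} :=
    Equiv.subtypeEquiv (Equiv.ofBijective _ (Phi_bijective (q := q) (n := n)))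
      (fun z => CPred_iff z)
  have e2 : {p : (Fin n → ZMod q) × ZMod q //
        p.2 ≠ 0 ∧ PairPred (fun x => -p.2 - x) (Ft q p.2) p.1} ≃
      {p : ZMod q × (Fin n → ZMod q) //
        p.1 ≠ 0 ∧ PairPred (fun x => -p.1 - x) (Ft q p.1) p.2} :=
    (Equiv.prodComm (Fin n → ZMod q) (ZMod q)).subtypeEquiv (fun p => Iff.rfl)
  have e3 : {p : ZMod q × (Fin n → ZMod q) //
        p.1 ≠ 0 ∧ PairPred (fun x => -p.1 - x) (Ft q p.1) p.2} ≃
      Σ t : ZMod q, {w : Fin n → ZMod q //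
        t ≠ 0 ∧ PairPred (fun x => -t - x) (Ft q t) w} :=
    Equiv.subtypeProdEquivSigmaSubtype
      (fun t (w : Fin n → ZMod q) => t ≠ 0 ∧ PairPred (fun x => -t - x) (Ft q t) w)
  rw [Nat.card_congr ((e1.trans e2).trans e3), Nat.card_eq_fintype_card,
    Fintype.card_sigma]
  refine Finset.sum_congr rfl (fun t _ => ?_)
  by_cases ht : t = 0
  · rw [if_pos ht]
    exact Fintype.card_eq_zero_iff.mpr ⟨fun w => w.2.1 ht⟩
  · rw [if_neg ht, ← Nat.card_eq_fintype_card,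
      Nat.card_congr (Equiv.subtypeEquivRight (fun w => and_iff_right ht))]
    have hσ : ∀ x : ZMod q, -t - (-t - x) = x := fun x => by ring
    have hF : ∀ x ∈ Ft q t, -t - x ∈ Ft q t := by
      intro x hx
      rw [mem_Ft] at hx ⊢
      rcases hx with h | h | h
      · right; left; rw [h]; ring
      · left; rw [h]; ring
      · right; right; linear_combination -h
    have hfix : ∀ x : ZMod q, -t - x = x → x ∈ Ft q t := by
      intro x hx
      rw [mem_Ft]
      right; right
      linear_combination -hx
    rw [pair_count (fun x : ZMod q => -t - x) hσ (Ft q t) hF hfix n, ZMod.card]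

end Ccount

section FtCard

variable {q : ℕ} [NeZero q]

lemma Ft_card_odd (hq : Odd q) {t : ZMod q} (ht : t ≠ 0) : (Ft q t).card = 3 := by
  classical
  set c : ZMod q := (((q + 1) / 2 : ℕ) : ZMod q) * (-t) with hc
  have hc2 : 2 * c = -t := by
    have := odd_half_mul hq (-t)
    linear_combination this
  have hfilter : (Finset.univ.filter (fun x : ZMod q => 2 * x = -t)) = {c} := by
    ext x
    simp only [Finset.mem_filter, Finset.mem_univ, true_and, Finset.mem_singleton]
    constructor
    · intro hx
      exact odd_two_mul_inj hq (by rw [hx, hc2])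
    · rintro rfl
      exact hc2
  have hc0 : c ≠ 0 := by
    intro h
    rw [h, mul_zero] at hc2
    exact ht (by linear_combination hc2)
  have hct : c ≠ -t := by
    intro h
    rw [h] at hc2
    exact ht (by linear_combination -hc2)
  have ht0 : (0 : ZMod q) ≠ -t := by
    intro h
    exact ht (by linear_combination h)
  rw [Ft, hfilter]
  rw [Finset.card_insert_of_notMem (by simp [ht0, hc0.symm]),
    Finset.card_insert_of_notMem (by simp [hct.symm]), Finset.card_singleton]

lemma Ft_card_even_mem (hq2 : 2 ∣ q) {t : ZMod q} (ht : t ≠ 0)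
    (hex : ∃ x : ZMod q, 2 * x = -t) : (Ft q t).card = 4 := by
  classical
  obtain ⟨x₀, hx₀⟩ := hex
  set h2 : ZMod q := ((q / 2 : ℕ) : ZMod q) with hh2
  have hh2ne : h2 ≠ 0 := even_half_ne_zero hq2
  have hfilter : (Finset.univ.filter (fun x : ZMod q => 2 * x = -t)) = {x₀, x₀ + h2} := by
    ext x
    simp only [Finset.mem_filter, Finset.mem_univ, true_and, Finset.mem_insert,
      Finset.mem_singleton]
    constructor
    · intro hx
      exact (even_two_mul_inj_iff hq2).mp (by rw [hx, hx₀])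
    · rintro (rfl | rfl)
      · exact hx₀
      · have := even_two_mul_half (q := q) hq2
        calc 2 * (x₀ + h2) = 2 * x₀ + 2 * h2 := by ring
          _ = -t := by rw [hx₀, this, add_zero]
  have hx₀0 : x₀ ≠ 0 := by
    intro h
    rw [h, mul_zero] at hx₀
    exact ht (by linear_combination hx₀)
  have hx₀t : x₀ ≠ -t := by
    intro h
    rw [h] at hx₀
    exact ht (by linear_combination -hx₀)
  have hx₁0 : x₀ + h2 ≠ 0 := by
    intro h
    have h1 : 2 * (x₀ + h2) = -t := by
      have := even_two_mul_half (q := q) hq2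
      calc 2 * (x₀ + h2) = 2 * x₀ + 2 * h2 := by ring
        _ = -t := by rw [hx₀, this, add_zero]
    rw [h, mul_zero] at h1
    exact ht (by linear_combination h1)
  have hx₁t : x₀ + h2 ≠ -t := by
    intro h
    have h1 : 2 * (x₀ + h2) = -t := by
      have := even_two_mul_half (q := q) hq2
      calc 2 * (x₀ + h2) = 2 * x₀ + 2 * h2 := by ring
        _ = -t := by rw [hx₀, this, add_zero]
    rw [h] at h1
    exact ht (by linear_combination -h1)
  have hx01 : x₀ ≠ x₀ + h2 := by
    intro h
    exact hh2ne (by linear_combination -h)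
  have ht0 : (0 : ZMod q) ≠ -t := by
    intro h
    exact ht (by linear_combination h)
  rw [Ft, hfilter]
  rw [Finset.card_insert_of_notMem (by simp [ht0, hx₀0.symm, hx₁0.symm]),
    Finset.card_insert_of_notMem (by simp [hx₀t.symm, hx₁t.symm]),
    Finset.card_insert_of_notMem (by simpa using hx01), Finset.card_singleton]

lemma Ft_card_even_nomem {t : ZMod q} (ht : t ≠ 0)
    (hnex : ¬∃ x : ZMod q, 2 * x = -t) : (Ft q t).card = 2 := by
  classical
  have hfilter : (Finset.univ.filter (fun x : ZMod q => 2 * x = -t)) = ∅ := by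
    rw [Finset.filter_eq_empty_iff]
    intro x _
    exact fun hc => hnex ⟨x, hc⟩
  have ht0 : (0 : ZMod q) ≠ -t := by
    intro h
    exact ht (by linear_combination h)
  rw [Ft, hfilter]
  rw [Finset.card_insert_of_notMem (by simpa using ht0)]
  simp

lemma doubling_card (hq2 : 2 ∣ q) :
    (Finset.univ.filter (fun t : ZMod q => ∃ x : ZMod q, 2 * x = -t)).card = q / 2 := by
  classical
  set h2 : ZMod q := ((q / 2 : ℕ) : ZMod q) with hh2
  have hh2ne : h2 ≠ 0 := even_half_ne_zero hq2
  set g : ZMod q → ZMod q := fun x => -(2 * x) with hg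
  have himg : (Finset.univ.filter (fun t : ZMod q => ∃ x : ZMod q, 2 * x = -t)) =
      Finset.univ.image g := by
    ext t
    simp only [Finset.mem_filter, Finset.mem_univ, true_and, Finset.mem_image, hg]
    constructor
    · rintro ⟨x, hx⟩
      exact ⟨x, by rw [hx, neg_neg]⟩
    · rintro ⟨x, hx⟩
      exact ⟨x, by rw [← hx, neg_neg]⟩
  have hfib : ∀ y ∈ Finset.univ.image g,
      (Finset.univ.filter (fun x => g x = y)).card = 2 := by
    intro y hy
    obtain ⟨x₀, _, hx₀⟩ := Finset.mem_image.mp hy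
    have : (Finset.univ.filter (fun x => g x = y)) = {x₀, x₀ + h2} := by
      ext x
      simp only [Finset.mem_filter, Finset.mem_univ, true_and, Finset.mem_insert,
        Finset.mem_singleton, hg, ← hx₀]
      constructor
      · intro hx
        refine (even_two_mul_inj_iff hq2).mp ?_
        have := neg_injective hx
        exact this
      · rintro (rfl | rfl)
        · rfl
        · have := even_two_mul_half (q := q) hq2
          congr 1
          calc 2 * (x₀ + h2) = 2 * x₀ + 2 * h2 := by ring
            _ = 2 * x₀ := by rw [this, add_zero]
    rw [this, Finset.card_insert_of_notMem
      (by simp only [Finset.mem_singleton]; intro h; exact hh2ne (by linear_combination -h)),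
      Finset.card_singleton]
  have hcard : (Finset.univ : Finset (ZMod q)).card =
      ∑ y ∈ Finset.univ.image g, (Finset.univ.filter (fun x => g x = y)).card :=
    Finset.card_eq_sum_card_fiberwise (fun x _ => Finset.mem_image_of_mem g (Finset.mem_univ x))
  rw [Finset.sum_congr rfl hfib, Finset.sum_const, smul_eq_mul] at hcard
  rw [Finset.card_univ, ZMod.card] at hcard
  rw [himg]
  omega

end FtCard

section FinalCounts

variable {q : ℕ} [NeZero q]

lemma count_C_odd (hq : Odd q) (n : ℕ) :
    Nat.card {z : Fin (n+1) → ZMod q // CPred z} =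
      (q - 1) * ∏ j ∈ Finset.range n, (q - 3 - 2 * j) := by
  classical
  rw [count_C n]
  rw [← Finset.sum_erase_add _ _ (Finset.mem_univ (0 : ZMod q)), if_pos rfl, add_zero]
  have hterm : ∀ t ∈ (Finset.univ : Finset (ZMod q)).erase 0,
      (if t = 0 then 0 else ∏ j ∈ Finset.range n, (q - (Ft q t).card - 2 * j)) =
        ∏ j ∈ Finset.range n, (q - 3 - 2 * j) := by
    intro t htmem
    have ht : t ≠ 0 := (Finset.mem_erase.mp htmem).1
    rw [if_neg ht, Ft_card_odd hq ht]
  rw [Finset.sum_congr rfl hterm, Finset.sum_const, smul_eq_mul,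
    Finset.card_erase_of_mem (Finset.mem_univ _), Finset.card_univ, ZMod.card]

lemma count_C_even (hq2 : 2 ∣ q) (n : ℕ) :
    Nat.card {z : Fin (n+1) → ZMod q // CPred z} =
      (q / 2) * (∏ j ∈ Finset.range n, (q - 2 - 2 * j)) +
        (q / 2 - 1) * ∏ j ∈ Finset.range n, (q - 4 - 2 * j) := by
  classical
  rw [count_C n]
  set p : ZMod q → Prop := fun t => ∃ x : ZMod q, 2 * x = -t with hp
  set f : ZMod q → ℕ :=
    fun t => if t = 0 then 0 else ∏ j ∈ Finset.range n, (q - (Ft q t).card - 2 * j) with hf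
  rw [← Finset.sum_filter_add_sum_filter_not Finset.univ p f]
  have h0mem : (0 : ZMod q) ∈ Finset.univ.filter p := by
    simp only [Finset.mem_filter, Finset.mem_univ, true_and, hp]
    exact ⟨0, by rw [mul_zero, neg_zero]⟩
  have hDcard : (Finset.univ.filter p).card = q / 2 := doubling_card hq2
  have hpart1 : ∑ t ∈ Finset.univ.filter p, f t =
      (q / 2 - 1) * ∏ j ∈ Finset.range n, (q - 4 - 2 * j) := by
    rw [← Finset.sum_erase_add _ _ h0mem, show f 0 = 0 from if_pos rfl, add_zero]
    have hterm : ∀ t ∈ (Finset.univ.filter p).erase 0,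
        f t = ∏ j ∈ Finset.range n, (q - 4 - 2 * j) := by
      intro t htmem
      have ht : t ≠ 0 := (Finset.mem_erase.mp htmem).1
      have htp : p t := (Finset.mem_filter.mp (Finset.mem_erase.mp htmem).2).2
      rw [hf]
      simp only
      rw [if_neg ht, Ft_card_even_mem hq2 ht htp]
    rw [Finset.sum_congr rfl hterm, Finset.sum_const, smul_eq_mul,
      Finset.card_erase_of_mem h0mem, hDcard]
  have hpart2 : ∑ t ∈ Finset.univ.filter (fun t => ¬ p t), f t =
      (q / 2) * ∏ j ∈ Finset.range n, (q - 2 - 2 * j) := by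
    have hterm : ∀ t ∈ Finset.univ.filter (fun t => ¬ p t),
        f t = ∏ j ∈ Finset.range n, (q - 2 - 2 * j) := by
      intro t htmem
      have htp : ¬ p t := (Finset.mem_filter.mp htmem).2
      have ht : t ≠ 0 := by
        intro h
        exact htp (by rw [h, hp]; exact ⟨0, by rw [mul_zero, neg_zero]⟩)
      rw [hf]
      simp only
      rw [if_neg ht, Ft_card_even_nomem ht htp]
    have hcard2 : (Finset.univ.filter (fun t => ¬ p t)).card = q - q / 2 := by
      have := Finset.card_filter_add_card_filter_not
        (s := (Finset.univ : Finset (ZMod q))) (p := p)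
      rw [hDcard, Finset.card_univ, ZMod.card] at this
      omega
    rw [Finset.sum_congr rfl hterm, Finset.sum_const, smul_eq_mul, hcard2]
    have hq2' : q - q / 2 = q / 2 := by
      obtain ⟨k, rfl⟩ := hq2
      omega
    rw [hq2']
  rw [hpart1, hpart2]
  ring

lemma arith_odd (hq : 0 < q) (n : ℕ) :
    ∏ j ∈ Finset.range (n+1), (q - 1 - 2 * j) =
      (q - 1) * ∏ j ∈ Finset.range n, (q - 3 - 2 * j) := by
  have h1 : ∏ j ∈ Finset.range n, (q - 1 - 2 * (j+1)) =
      ∏ j ∈ Finset.range n, (q - 3 - 2 * j) :=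
    Finset.prod_congr rfl (fun j _ => by omega)
  rw [Finset.prod_range_succ', h1, Nat.mul_zero, Nat.sub_zero, mul_comm]

lemma arith_even (hq2 : 2 ∣ q) (hq : 0 < q) (n : ℕ) :
    (∏ j ∈ Finset.range (n+1), (q - 2 - 2 * j)) +
        (n+1) * ∏ j ∈ Finset.range n, (q - 2 - 2 * j) =
      (q / 2) * (∏ j ∈ Finset.range n, (q - 2 - 2 * j)) +
        (q / 2 - 1) * ∏ j ∈ Finset.range n, (q - 4 - 2 * j) := by
  obtain ⟨k, rfl⟩ := hq2
  have hk : 1 ≤ k := by omega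
  have hdiv : 2 * k / 2 = k := by omega
  rw [hdiv]
  set P1 : ℕ := ∏ j ∈ Finset.range n, (k - 1 - j) with hP1
  set R1 : ℕ := ∏ j ∈ Finset.range n, (k - 2 - j) with hR1
  have hP : ∏ j ∈ Finset.range n, (2 * k - 2 - 2 * j) = 2^n * P1 := by
    calc ∏ j ∈ Finset.range n, (2 * k - 2 - 2 * j)
        = ∏ j ∈ Finset.range n, (2 * (k - 1 - j)) :=
          Finset.prod_congr rfl (fun j _ => by omega)
      _ = (∏ _j ∈ Finset.range n, 2) * P1 := Finset.prod_mul_distrib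
      _ = 2^n * P1 := by rw [Finset.prod_const, Finset.card_range]
  have hR : ∏ j ∈ Finset.range n, (2 * k - 4 - 2 * j) = 2^n * R1 := by
    calc ∏ j ∈ Finset.range n, (2 * k - 4 - 2 * j)
        = ∏ j ∈ Finset.range n, (2 * (k - 2 - j)) :=
          Finset.prod_congr rfl (fun j _ => by omega)
      _ = (∏ _j ∈ Finset.range n, 2) * R1 := Finset.prod_mul_distrib
      _ = 2^n * R1 := by rw [Finset.prod_const, Finset.card_range]
  have hPsucc : ∏ j ∈ Finset.range (n+1), (2 * k - 2 - 2 * j) =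
      2^(n+1) * (P1 * (k - 1 - n)) := by
    calc ∏ j ∈ Finset.range (n+1), (2 * k - 2 - 2 * j)
        = ∏ j ∈ Finset.range (n+1), (2 * (k - 1 - j)) :=
          Finset.prod_congr rfl (fun j _ => by omega)
      _ = (∏ _j ∈ Finset.range (n+1), 2) * ∏ j ∈ Finset.range (n+1), (k - 1 - j) :=
          Finset.prod_mul_distrib
      _ = 2^(n+1) * (P1 * (k - 1 - n)) := by
          rw [Finset.prod_const, Finset.card_range, Finset.prod_range_succ]
  have hkR : (k - 1) * R1 = P1 * (k - 1 - n) := by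
    have h1 : ∏ j ∈ Finset.range (n+1), (k - 1 - j) = R1 * (k - 1) := by
      rw [Finset.prod_range_succ', Nat.sub_zero]
      congr 1
      exact Finset.prod_congr rfl (fun j _ => by omega)
    have h2 : ∏ j ∈ Finset.range (n+1), (k - 1 - j) = P1 * (k - 1 - n) :=
      Finset.prod_range_succ _ n
    rw [mul_comm, ← h1]
    exact h2
  rw [hP, hR, hPsucc]
  rcases le_or_gt (n+1) k with hcase | hcase
  · have hck : (k - 1 - n) + (n + 1) = k := by omega
    calc 2^(n+1) * (P1 * (k - 1 - n)) + (n+1) * (2^n * P1)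
        = ((k - 1 - n) + (n + 1)) * (2^n * P1) + 2^n * (P1 * (k - 1 - n)) := by ring
      _ = k * (2^n * P1) + 2^n * (P1 * (k - 1 - n)) := by rw [hck]
      _ = k * (2^n * P1) + (k - 1) * (2^n * R1) := by rw [← hkR]; ring
  · have hP10 : P1 = 0 := by
      refine Finset.prod_eq_zero (Finset.mem_range.mpr (show k - 1 < n by omega)) ?_
      omega
    have hR10 : (k - 1) * R1 = 0 := by rw [hkR, hP10, zero_mul]
    rw [hP10]
    calc 2^(n+1) * (0 * (k - 1 - n)) + (n+1) * (2^n * 0) = 0 := by ring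
      _ = k * (2^n * 0) + (k - 1) * (2^n * R1) := by
          have : (k - 1) * (2^n * R1) = 2^n * ((k - 1) * R1) := by ring
          rw [this, hR10]
          ring

end FinalCounts

/-- The characteristic quasi-polynomials of the root systems `B_m` and `C_m` coincide:
for every positive integer `q`, the number of `z ∈ (ℤ/qℤ)^m` with `z i ≠ 0` for all `i`
and `z i ≠ z j`, `z i + z j ≠ 0` for all `i < j` (the count for `B_m`) equals the number
of `z ∈ (ℤ/qℤ)^m` satisfying the nonvanishing conditions of the coefficient matrix of
the positive roots of `C_m` with respect to its simple roots (here indices are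
`0`-based, so `z ⟨m−1⟩` plays the role of `z_m`). -/
theorem stmt_12 (m : ℕ) (hm : 2 ≤ m) (q : ℕ) (hq : 0 < q) :
    Nat.card {z : Fin m → ZMod q //
        (∀ i, z i ≠ 0) ∧ ∀ i j : Fin m, i < j → z i ≠ z j ∧ z i + z j ≠ 0} =
      Nat.card {z : Fin m → ZMod q //
        (∀ i j : Fin m, i < j → ∑ k ∈ Finset.Ico i j, z k ≠ 0) ∧
        (∀ i : Fin m,
          2 * ∑ k ∈ Finset.Ico i ⟨m - 1, by omega⟩, z k + z ⟨m - 1, by omega⟩ ≠ 0) ∧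
        (∀ i j : Fin m, i < j →
          ∑ k ∈ Finset.Ico i j, z k +
            2 * ∑ k ∈ Finset.Ico j ⟨m - 1, by omega⟩, z k + z ⟨m - 1, by omega⟩ ≠ 0)} := by
  haveI : NeZero q := ⟨hq.ne'⟩
  obtain ⟨n, rfl⟩ : ∃ n, m = n + 1 := ⟨m - 1, by omega⟩
  show Nat.card {z : Fin (n+1) → ZMod q // BPred z} =
    Nat.card {z : Fin (n+1) → ZMod q // CPred z}
  rcases Nat.even_or_odd q with hqe | hqo
  · have hdvd : 2 ∣ q := hqe.two_dvd
    rw [count_B_even hdvd n, count_C_even hdvd n]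
    exact arith_even hdvd hq n
  · rw [count_B_odd hqo (n+1), count_C_odd hqo n]
    exact arith_odd hq n
end
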